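/- arXiv:2304.14326 — 7 statements merged into one kernel-verified Lean document; each statement's English description precedes it below -/
import Mathlib

section
/- Let X be a finite state space partitioned into layers X₀,…,X_L with X₀ = {x₀} and X_L = {x_L}, let A be a nonempty finite action set, and let P be a transition function such that for each x ∈ X_k (k < L) and a ∈ A, P(·|x,a) is a probability distribution supported on X_{k+1}. Let q : X × A × X → [0,1] be nonnegative with q(x,a,x') = 0 unless x ∈ X_k and x' ∈ X_{k+1} for some k ∈ {0,…,L−1}. Then there exists a policy π with q = q^{P,π} if and only if the following three conditions hold: (i) for every k ∈ {0,…,L−1}, Σ_{x∈X_k} Σ_{a∈A} Σ_{x'∈X_{k+1}} q(x,a,x') = 1; (ii) for every k ∈ {1,…,L−1} and every x ∈ X_k, Σ_{a∈A} Σ_{x'∈X_{k+1}} q(x,a,x') = Σ_{x'∈X_{k−1}} Σ_{a∈A} q(x',a,x); and (iii) q(x,a,x') = q(x,a)·P(x'|x,a) for every x ∈ X_k, a ∈ A, x' ∈ X_{k+1}, where q(x,a) := Σ_{x'∈X_{k+1}} q(x,a,x'). -/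
open Finset

/-- Characterization of valid occupancy measures of an episodic loop-free MDP
(Lemma 1, Rosenberg & Mansour): `q` is the occupancy measure `q^{P,π}` of some policy `π`
iff the normalization, flow-conservation, and induced-transition conditions hold. -/
theorem stmt0 {X A : Type*} [Fintype X] [Fintype A] [Nonempty A]
    (L : ℕ) (hL : 1 ≤ L)
    (layer : X → ℕ) (hlayer : ∀ x, layer x ≤ L)
    (x0 xL : X)
    (h0 : ∀ x, layer x = 0 ↔ x = x0)
    (hLsing : ∀ x, layer x = L ↔ x = xL)
    (P : X → A → X → ℝ)
    (hPnn : ∀ x a x', 0 ≤ P x a x')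
    (hPsum : ∀ x a, layer x < L → ∑ x', P x a x' = 1)
    (hPsupp : ∀ x a x', layer x < L → P x a x' ≠ 0 → layer x' = layer x + 1)
    (q : X → A → X → ℝ)
    (hqnn : ∀ x a x', 0 ≤ q x a x') (hq1 : ∀ x a x', q x a x' ≤ 1)
    (hqsupp : ∀ x a x', q x a x' ≠ 0 → layer x < L ∧ layer x' = layer x + 1) :
    (∃ π : X → A → ℝ, (∀ x a, 0 ≤ π x a) ∧ (∀ x, ∑ a, π x a = 1) ∧
      ∃ reach : X → ℝ, reach x0 = 1 ∧
        (∀ x' : X, 1 ≤ layer x' →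
          reach x' = ∑ x ∈ Finset.univ.filter (fun x => layer x + 1 = layer x'),
            ∑ a, reach x * π x a * P x a x') ∧
        (∀ x a x', layer x < L → layer x' = layer x + 1 →
          q x a x' = reach x * π x a * P x a x'))
    ↔
    ((∀ k < L, ∑ x ∈ Finset.univ.filter (fun x => layer x = k), ∑ a,
        ∑ x' ∈ Finset.univ.filter (fun x' => layer x' = k + 1), q x a x' = 1) ∧
      (∀ x : X, 1 ≤ layer x → layer x < L →
        ∑ a, ∑ x' ∈ Finset.univ.filter (fun x' => layer x' = layer x + 1), q x a x' =
          ∑ x'' ∈ Finset.univ.filter (fun x'' => layer x'' + 1 = layer x), ∑ a, q x'' a x) ∧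
      (∀ x a x', layer x < L → layer x' = layer x + 1 →
        q x a x' =
          (∑ y ∈ Finset.univ.filter (fun y => layer y = layer x + 1), q x a y) * P x a x')) := by
  constructor
  · rintro ⟨π, hπnn, hπsum, reach, hr0, hrec, hq⟩
    have Pfilt : ∀ x a, layer x < L →
        ∑ x' ∈ univ.filter (fun x' => layer x' = layer x + 1), P x a x' = 1 := by
      intro x a hx
      rw [← hPsum x a hx]
      apply Finset.sum_subset (filter_subset _ _)
      intro x' _ hx'
      by_contra h
      exact hx' (mem_filter.mpr ⟨mem_univ _, hPsupp x a x' hx h⟩)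
    have outEq : ∀ x a, layer x < L →
        ∑ x' ∈ univ.filter (fun x' => layer x' = layer x + 1), q x a x' = reach x * π x a := by
      intro x a hx
      rw [Finset.sum_congr rfl fun x' hx' => hq x a x' hx (mem_filter.mp hx').2,
        ← Finset.mul_sum, Pfilt x a hx, mul_one]
    have filt0 : univ.filter (fun x => layer x = 0) = {x0} := by
      ext x; simp [h0]
    have sum_reach : ∀ k, k ≤ L → ∑ x ∈ univ.filter (fun x => layer x = k), reach x = 1 := by
      intro k
      induction k with
      | zero => intro _; rw [filt0, Finset.sum_singleton, hr0]
      | succ k ih =>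
        intro hk
        have hkL : k < L := hk
        have step1 : ∑ x' ∈ univ.filter (fun x' => layer x' = k + 1), reach x'
            = ∑ x' ∈ univ.filter (fun x' => layer x' = k + 1),
                ∑ x ∈ univ.filter (fun x => layer x = k), ∑ a, reach x * π x a * P x a x' := by
          refine Finset.sum_congr rfl fun x' hx' => ?_
          have hl : layer x' = k + 1 := by simpa using (mem_filter.mp hx').2
          rw [hrec x' (by omega)]
          congr 1
          ext x
          simp only [mem_filter, mem_univ, true_and]
          omega
        rw [step1, Finset.sum_comm]
        have hmain : ∀ x ∈ univ.filter (fun x => layer x = k),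
            ∑ x' ∈ univ.filter (fun x' => layer x' = k + 1), ∑ a, reach x * π x a * P x a x'
            = reach x := by
          intro x hx
          have hl : layer x = k := by simpa using (mem_filter.mp hx).2
          rw [Finset.sum_comm]
          calc ∑ a, ∑ x' ∈ univ.filter (fun x' => layer x' = k + 1), reach x * π x a * P x a x'
              = ∑ a, reach x * π x a := by
                refine Finset.sum_congr rfl fun a _ => ?_
                rw [← Finset.mul_sum]
                have hP := Pfilt x a (by omega)
                rw [hl] at hP
                rw [hP, mul_one]
            _ = reach x := by rw [← Finset.mul_sum, hπsum, mul_one]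
        rw [Finset.sum_congr rfl hmain, ih (by omega)]
    refine ⟨?_, ?_, ?_⟩
    · intro k hk
      have hmain : ∀ x ∈ univ.filter (fun x => layer x = k),
          ∑ a, ∑ x' ∈ univ.filter (fun x' => layer x' = k + 1), q x a x' = reach x := by
        intro x hx
        have hl : layer x = k := by simpa using (mem_filter.mp hx).2
        calc ∑ a, ∑ x' ∈ univ.filter (fun x' => layer x' = k + 1), q x a x'
            = ∑ a, reach x * π x a := by
              refine Finset.sum_congr rfl fun a _ => ?_
              have ho := outEq x a (by omega)
              rw [hl] at ho
              exact ho
          _ = reach x := by rw [← Finset.mul_sum, hπsum, mul_one]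
      rw [Finset.sum_congr rfl hmain, sum_reach k (le_of_lt hk)]
    · intro x h1x hxL
      have LHS : ∑ a, ∑ x' ∈ univ.filter (fun x' => layer x' = layer x + 1), q x a x' = reach x := by
        calc ∑ a, ∑ x' ∈ univ.filter (fun x' => layer x' = layer x + 1), q x a x'
            = ∑ a, reach x * π x a := Finset.sum_congr rfl fun a _ => outEq x a hxL
          _ = reach x := by rw [← Finset.mul_sum, hπsum, mul_one]
      rw [LHS, hrec x h1x]
      refine Finset.sum_congr rfl fun x'' hx'' => Finset.sum_congr rfl fun a _ => ?_
      have hl : layer x'' + 1 = layer x := by simpa using (mem_filter.mp hx'').2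
      have hxL' : layer x'' < L := by omega
      exact (hq x'' a x hxL' hl.symm).symm
    · intro x a x' hxL hl
      rw [hq x a x' hxL hl, outEq x a hxL]
  · rintro ⟨h1, h2, h3⟩
    classical
    set u : X → A → ℝ := fun x a => ∑ x' ∈ univ.filter (fun x' => layer x' = layer x + 1), q x a x' with hu
    set out : X → ℝ := fun x => ∑ a, u x a with hout
    set π : X → A → ℝ := fun x a => if out x = 0 then (Fintype.card A : ℝ)⁻¹ else u x a / out x with hπ
    set reach : X → ℝ := fun x => if layer x = 0 then 1 else
      ∑ x'' ∈ univ.filter (fun x'' => layer x'' + 1 = layer x), ∑ a, q x'' a x with hreach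
    have hunn : ∀ x a, 0 ≤ u x a := fun x a => Finset.sum_nonneg fun _ _ => hqnn _ _ _
    have houtnn : ∀ x, 0 ≤ out x := fun x => Finset.sum_nonneg fun a _ => hunn x a
    have hx0 : layer x0 = 0 := (h0 x0).mpr rfl
    have filt0 : univ.filter (fun x => layer x = 0) = {x0} := by ext x; simp [h0]
    have hout0 : out x0 = 1 := by
      have h := h1 0 hL
      rw [filt0, Finset.sum_singleton] at h
      simp only [hout, hu, hx0]
      exact h
    have reach_out : ∀ x, layer x < L → reach x = out x := by
      intro x hx
      by_cases h : layer x = 0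
      · have hxx : x = x0 := (h0 x).mp h
        subst hxx
        simp only [hreach, hx0, if_pos rfl] at *
        exact hout0.symm
      · have h1x : 1 ≤ layer x := by omega
        have hc := h2 x h1x hx
        simp only [hreach, if_neg h]
        rw [← hc]
    have key : ∀ x a x', layer x < L → layer x' = layer x + 1 →
        q x a x' = reach x * π x a * P x a x' := by
      intro x a x' hxL hl
      rw [reach_out x hxL]
      have hq3 : q x a x' = u x a * P x a x' := h3 x a x' hxL hl
      by_cases h : out x = 0
      · have hu0 : u x a = 0 :=
          (Finset.sum_eq_zero_iff_of_nonneg (fun a _ => hunn x a)).mp h a (mem_univ a)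
        rw [hq3, hu0, h]
        ring
      · simp only [hπ, if_neg h]
        rw [hq3]
        field_simp
    refine ⟨π, ?_, ?_, reach, ?_, ?_, key⟩
    · intro x a
      simp only [hπ]
      split
      · positivity
      · exact div_nonneg (hunn x a) (houtnn x)
    · intro x
      by_cases h : out x = 0
      · simp only [hπ, if_pos h, Finset.sum_const, Finset.card_univ, nsmul_eq_mul]
        rw [mul_inv_cancel₀]
        exact_mod_cast Fintype.card_ne_zero
      · simp only [hπ, if_neg h]
        rw [← Finset.sum_div]
        have hh : (∑ a, u x a) = out x := rfl
        rw [hh]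
        exact div_self h
    · simp [hreach, hx0]
    · intro x' h1x'
      have hne : layer x' ≠ 0 := by omega
      simp only [hreach, if_neg hne]
      refine Finset.sum_congr rfl fun x hx => Finset.sum_congr rfl fun a _ => ?_
      have hl : layer x + 1 = layer x' := by simpa using (mem_filter.mp hx).2
      have hxL : layer x < L := by have := hlayer x'; omega
      exact key x a x' hxL hl.symm
end

section
/- Fix d, T ∈ ℕ with T ≥ 1, reals L > 0, C > 0, E ≥ 0, and for each t ∈ {1,…,T+1} a nonempty closed convex set K_t ⊆ { q ∈ ℝ^d : 0 ≤ q_j ≤ 1 for all j, and Σ_j q_j ≤ L }. Let ℓ_1,…,ℓ_T ∈ ℝ^d be loss vectors with ℓ̄_t := max_{τ ≤ t} ‖ℓ_τ‖_∞ > 0 for all t, let q̂_1 ∈ K_1, and define q̂_{t+1} = Π_{K_{t+1}}(q̂_t − η_t ℓ_t) with η_t = 1/(ℓ̄_t C √T). Let q_1,…,q_T ∈ ℝ^d satisfy Σ_{t=1}^T ‖q_t − q̂_t‖₁ ≤ E. Then for every q ∈ ⋂_{t} K_t and every interval 1 ≤ t₁ ≤ t₂ ≤ T: Σ_{t=t₁}^{t₂}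 ℓ_tᵀ(q_t − q) ≤ ℓ̄_{t₁,t₂}·E + ℓ̄_{t₂}·L·C·√T + ℓ̄_{t₁,t₂}·(d/2)·(t₂−t₁+1)/(C√T), where ℓ̄_{t₁,t₂} := max_{t₁ ≤ t ≤ t₂} ‖ℓ_t‖_∞. -/
open Finset Matrix

/-- The ℓ₁ norm on `ℝ^d`. -/
noncomputable def l1 {d : ℕ} (x : Fin d → ℝ) : ℝ := ∑ i, |x i|

/-- The ℓ∞ norm on `ℝ^d`. -/
noncomputable def linf {d : ℕ} (x : Fin d → ℝ) : ℝ := ⨆ i, |x i|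

/-- Dot product on `ℝ^d`. -/
noncomputable def dotp {d : ℕ} (x y : Fin d → ℝ) : ℝ := ∑ i, x i * y i

/-- Squared Euclidean distance on `ℝ^d`. -/
noncomputable def sqdist {d : ℕ} (x y : Fin d → ℝ) : ℝ := ∑ i, (x i - y i) ^ 2

/-- `z` is the Euclidean (metric) projection of `p` onto `K`. -/
def IsEuclidProj {d : ℕ} (K : Set (Fin d → ℝ)) (p z : Fin d → ℝ) : Prop :=
  z ∈ K ∧ ∀ y ∈ K, sqdist z p ≤ sqdist y p

/-- `intervalMax ℓ a b = max_{a ≤ t ≤ b} ‖ℓ_t‖_∞` (as the supremum of a finite nonempty set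
of reals, for `a ≤ b`). -/
noncomputable def intervalMax {d : ℕ} (ℓ : ℕ → Fin d → ℝ) (a b : ℕ) : ℝ :=
  sSup ((fun t => linf (ℓ t)) '' Set.Icc a b)

lemma my_linf_nonneg {d : ℕ} (x : Fin d → ℝ) : 0 ≤ linf x :=
  Real.iSup_nonneg fun i => abs_nonneg _

lemma my_abs_le_linf {d : ℕ} (x : Fin d → ℝ) (i : Fin d) : |x i| ≤ linf x := by
  rw [linf]
  exact le_ciSup (f := fun i => |x i|) (Set.Finite.bddAbove (Set.finite_range _)) i

lemma my_l1_nonneg {d : ℕ} (x : Fin d → ℝ) : 0 ≤ l1 x :=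
  Finset.sum_nonneg fun i _ => abs_nonneg _

lemma my_sqdist_nonneg {d : ℕ} (x y : Fin d → ℝ) : 0 ≤ sqdist x y :=
  Finset.sum_nonneg fun i _ => sq_nonneg _

lemma my_le_intervalMax {d : ℕ} (ℓ : ℕ → Fin d → ℝ) {a b t : ℕ} (h1 : a ≤ t) (h2 : t ≤ b) :
    linf (ℓ t) ≤ intervalMax ℓ a b :=
  le_csSup ((Set.finite_Icc a b).image _).bddAbove ⟨t, ⟨h1, h2⟩, rfl⟩

lemma my_intervalMax_nonneg {d : ℕ} (ℓ : ℕ → Fin d → ℝ) {a b : ℕ} (h : a ≤ b) :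
    0 ≤ intervalMax ℓ a b :=
  le_trans (my_linf_nonneg _) (my_le_intervalMax ℓ le_rfl h)

lemma my_intervalMax_mono {d : ℕ} (ℓ : ℕ → Fin d → ℝ) {a b b' : ℕ} (hab : a ≤ b) (h : b ≤ b') :
    intervalMax ℓ a b ≤ intervalMax ℓ a b' :=
  csSup_le_csSup ((Set.finite_Icc a b').image _).bddAbove
    ((Set.nonempty_Icc.2 hab).image _)
    (Set.image_mono (Set.Icc_subset_Icc_right h))

lemma my_dotp_le {d : ℕ} (x y : Fin d → ℝ) : dotp x y ≤ linf x * l1 y := by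
  rw [dotp, l1, Finset.mul_sum]
  apply Finset.sum_le_sum
  intro i _
  calc x i * y i ≤ |x i * y i| := le_abs_self _
    _ = |x i| * |y i| := abs_mul _ _
    _ ≤ linf x * |y i| := mul_le_mul_of_nonneg_right (my_abs_le_linf x i) (abs_nonneg _)

lemma my_sqdist_le_2L {d : ℕ} {L : ℝ} {x y : Fin d → ℝ}
    (hx : (∀ j, 0 ≤ x j ∧ x j ≤ 1) ∧ ∑ j, x j ≤ L)
    (hy : (∀ j, 0 ≤ y j ∧ y j ≤ 1) ∧ ∑ j, y j ≤ L) :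
    sqdist x y ≤ 2 * L := by
  have h : sqdist x y ≤ ∑ j, (x j + y j) := by
    apply Finset.sum_le_sum
    intro i _
    obtain ⟨h1, h2⟩ := hx.1 i
    obtain ⟨h3, h4⟩ := hy.1 i
    nlinarith
  rw [Finset.sum_add_distrib] at h
  linarith [hx.2, hy.2]

lemma my_proj_contract {d : ℕ} {K : Set (Fin d → ℝ)} (hcv : Convex ℝ K)
    {p z y : Fin d → ℝ} (h : IsEuclidProj K p z) (hy : y ∈ K) :
    sqdist z y ≤ sqdist p y := by
  obtain ⟨hzK, hmin⟩ := h
  set A := sqdist y z with hA_def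
  set B := dotp (fun i => y i - z i) (fun i => z i - p i) with hB_def
  have hA : 0 ≤ A := my_sqdist_nonneg _ _
  have key : ∀ lam : ℝ, 0 < lam → lam ≤ 1 → 0 ≤ lam * A + 2 * B := by
    intro lam h0 hl1
    have hmem : (fun i => z i + lam * (y i - z i)) ∈ K := by
      have heq : (fun i => z i + lam * (y i - z i)) = (1 - lam) • z + lam • y := by
        funext i
        simp only [Pi.add_apply, Pi.smul_apply, smul_eq_mul]
        ring
      rw [heq]
      exact hcv hzK hy (by linarith) h0.le (by ring)
    have hm := hmin _ hmem
    have hexp : sqdist (fun i => z i + lam * (y i - z i)) p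
        = sqdist z p + lam * (lam * A + 2 * B) := by
      simp only [sqdist, dotp, hA_def, hB_def, Finset.mul_sum, ← Finset.sum_add_distrib]
      exact Finset.sum_congr rfl fun i _ => by ring
    rw [hexp] at hm
    have : 0 ≤ lam * (lam * A + 2 * B) := by linarith
    exact nonneg_of_mul_nonneg_right this h0
  have hB : 0 ≤ B := by
    rcases eq_or_lt_of_le hA with hA0 | hA0
    · have := key 1 one_pos le_rfl
      rw [← hA0] at this
      linarith
    · by_contra hBneg
      push_neg at hBneg
      have hlpos : 0 < min 1 (-B / A) := lt_min one_pos (div_pos (by linarith) hA0)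
      have hle : min 1 (-B / A) ≤ 1 := min_le_left _ _
      have h := key _ hlpos hle
      have : min 1 (-B / A) * A ≤ -B := by
        calc min 1 (-B / A) * A ≤ (-B / A) * A :=
          mul_le_mul_of_nonneg_right (min_le_right _ _) hA0.le
        _ = -B := div_mul_cancel₀ _ hA0.ne'
      linarith
  have hexp2 : sqdist p y = sqdist z y + sqdist p z + 2 * B := by
    simp only [sqdist, dotp, hB_def, Finset.mul_sum, ← Finset.sum_add_distrib]
    exact Finset.sum_congr rfl fun i _ => by ring
  have := my_sqdist_nonneg p z
  linarith

lemma my_abel (a D : ℕ → ℝ) (B : ℝ) (t₁ N : ℕ)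
    (ha0 : ∀ t, t₁ ≤ t → t ≤ N → 0 ≤ a t)
    (hamono : ∀ s t, t₁ ≤ s → s ≤ t → t ≤ N → a s ≤ a t)
    (hD : ∀ t, t₁ ≤ t → t ≤ N + 1 → 0 ≤ D t ∧ D t ≤ B) :
    ∀ n, t₁ ≤ n → n ≤ N →
      ∑ t ∈ Finset.Icc t₁ n, a t * (D t - D (t + 1)) ≤ a n * (B - D (n + 1)) := by
  intro n hn
  induction n, hn using Nat.le_induction with
  | base =>
    intro hN
    rw [Finset.Icc_self, Finset.sum_singleton]
    have h1 := ha0 t₁ le_rfl hN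
    have h2 := hD t₁ le_rfl (by omega)
    nlinarith
  | succ n hn ih =>
    intro hN
    have hnN : n ≤ N := by omega
    have hih := ih hnN
    rw [Finset.sum_Icc_succ_top (by omega : t₁ ≤ n + 1)]
    have hmono := hamono n (n + 1) hn (by omega) hN
    have hD1 := hD (n + 1) (by omega) (by omega)
    have hD2 := hD (n + 2) (by omega) (by omega)
    nlinarith [mul_le_mul_of_nonneg_right hmono (by linarith : (0:ℝ) ≤ B - D (n + 1))]

/-- Deterministic core of the interval-regret guarantee of UC-O-GDPS: the iterates `q̂_t`
are produced by projected OGD with adaptive learning rate `η_t = 1/(ℓ̄_t C √T)` and the true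
occupancy measures `q_t` satisfy `Σ_t ‖q_t − q̂_t‖₁ ≤ E`. -/
theorem stmt2 {d : ℕ} (T : ℕ) (hT : 1 ≤ T) (L C : ℝ) (hL : 0 < L) (hC : 0 < C)
    (K : ℕ → Set (Fin d → ℝ))
    (hKne : ∀ t ∈ Finset.Icc 1 (T + 1), (K t).Nonempty)
    (hKcl : ∀ t ∈ Finset.Icc 1 (T + 1), IsClosed (K t))
    (hKcv : ∀ t ∈ Finset.Icc 1 (T + 1), Convex ℝ (K t))
    (hKsub : ∀ t ∈ Finset.Icc 1 (T + 1),
      K t ⊆ {q : Fin d → ℝ | (∀ j, 0 ≤ q j ∧ q j ≤ 1) ∧ ∑ j, q j ≤ L})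
    (ℓ : ℕ → Fin d → ℝ)
    (hpos : ∀ t ∈ Finset.Icc 1 T, 0 < intervalMax ℓ 1 t)
    (E : ℝ) (hE : 0 ≤ E)
    (qh : ℕ → Fin d → ℝ)
    (hq1 : qh 1 ∈ K 1)
    (hupd : ∀ t ∈ Finset.Icc 1 T,
      IsEuclidProj (K (t + 1))
        (fun j => qh t j - (1 / (intervalMax ℓ 1 t * C * Real.sqrt T)) * ℓ t j)
        (qh (t + 1)))
    (qtrue : ℕ → Fin d → ℝ)
    (hdiff : ∑ t ∈ Finset.Icc 1 T, l1 (fun j => qtrue t j - qh t j) ≤ E)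
    (q : Fin d → ℝ) (hq : ∀ t ∈ Finset.Icc 1 (T + 1), q ∈ K t)
    (t₁ t₂ : ℕ) (h1 : 1 ≤ t₁) (h12 : t₁ ≤ t₂) (h2T : t₂ ≤ T) :
    ∑ t ∈ Finset.Icc t₁ t₂, dotp (ℓ t) (fun j => qtrue t j - q j) ≤
      intervalMax ℓ t₁ t₂ * E + intervalMax ℓ 1 t₂ * L * C * Real.sqrt T +
        intervalMax ℓ t₁ t₂ * (d / 2) * ((t₂ : ℝ) - t₁ + 1) / (C * Real.sqrt T) := by
  have hT' : (1:ℝ) ≤ (T:ℝ) := by exact_mod_cast hT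
  have hsqrt : 0 < Real.sqrt T := Real.sqrt_pos.2 (by linarith)
  have hs : 0 < C * Real.sqrt T := mul_pos hC hsqrt
  have hM : 0 ≤ intervalMax ℓ t₁ t₂ := my_intervalMax_nonneg ℓ h12
  -- iterates stay in the sets
  have hqhK : ∀ t, 1 ≤ t → t ≤ T + 1 → qh t ∈ K t := by
    intro t
    induction t with
    | zero => intro h; omega
    | succ n _ =>
      intro _ h2
      rcases Nat.eq_zero_or_pos n with hn | hn
      · subst hn; exact hq1
      · exact (hupd n (Finset.mem_Icc.2 ⟨hn, by omega⟩)).1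
  have hDb : ∀ t, 1 ≤ t → t ≤ T + 1 → 0 ≤ sqdist (qh t) q ∧ sqdist (qh t) q ≤ 2 * L := by
    intro t ha hb
    refine ⟨my_sqdist_nonneg _ _, ?_⟩
    exact my_sqdist_le_2L (hKsub t (Finset.mem_Icc.2 ⟨ha, hb⟩) (hqhK t ha hb))
      (hKsub t (Finset.mem_Icc.2 ⟨ha, hb⟩) (hq t (Finset.mem_Icc.2 ⟨ha, hb⟩)))
  -- per-step bound
  have step : ∀ t ∈ Finset.Icc t₁ t₂,
      dotp (ℓ t) (fun j => qtrue t j - q j) ≤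
        intervalMax ℓ t₁ t₂ * l1 (fun j => qtrue t j - qh t j)
        + (intervalMax ℓ 1 t * (C * Real.sqrt T) / 2
            * (sqdist (qh t) q - sqdist (qh (t + 1)) q)
          + (d : ℝ) * linf (ℓ t) / (2 * (C * Real.sqrt T))) := by
    intro t ht
    rw [Finset.mem_Icc] at ht
    obtain ⟨ht1, ht2⟩ := ht
    have htl : 1 ≤ t := le_trans h1 ht1
    have htT : t ≤ T := le_trans ht2 h2T
    have hm : 0 < intervalMax ℓ 1 t := hpos t (Finset.mem_Icc.2 ⟨htl, htT⟩)
    have hsplit : dotp (ℓ t) (fun j => qtrue t j - q j)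
        = dotp (ℓ t) (fun j => qtrue t j - qh t j)
          + dotp (ℓ t) (fun j => qh t j - q j) := by
      simp only [dotp, ← Finset.sum_add_distrib]
      exact Finset.sum_congr rfl fun i _ => by ring
    have hb1 : dotp (ℓ t) (fun j => qtrue t j - qh t j) ≤
        intervalMax ℓ t₁ t₂ * l1 (fun j => qtrue t j - qh t j) :=
      le_trans (my_dotp_le _ _)
        (mul_le_mul_of_nonneg_right (my_le_intervalMax ℓ ht1 ht2) (my_l1_nonneg _))
    have hproj' := hupd t (Finset.mem_Icc.2 ⟨htl, htT⟩)
    set u := intervalMax ℓ 1 t * C * Real.sqrt T with hu_def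
    have hu : 0 < u := mul_pos (mul_pos hm hC) hsqrt
    have hqmem : q ∈ K (t + 1) := hq (t + 1) (Finset.mem_Icc.2 ⟨by omega, by omega⟩)
    have hcv := hKcv (t + 1) (Finset.mem_Icc.2 ⟨by omega, by omega⟩)
    have hcontract := my_proj_contract hcv hproj' hqmem
    have hexpand : sqdist (fun j => qh t j - 1 / u * ℓ t j) q
        = sqdist (qh t) q - 2 * (1 / u) * dotp (ℓ t) (fun j => qh t j - q j)
          + (1 / u) ^ 2 * ∑ i, (ℓ t i) ^ 2 := by
      simp only [sqdist, dotp, Finset.mul_sum, ← Finset.sum_sub_distrib,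
        ← Finset.sum_add_distrib]
      exact Finset.sum_congr rfl fun i _ => by ring
    rw [hexpand] at hcontract
    have hS : (∑ i, (ℓ t i) ^ 2) ≤ (d : ℝ) * (linf (ℓ t) * intervalMax ℓ 1 t) := by
      have hb := Finset.sum_le_card_nsmul Finset.univ (fun i => (ℓ t i) ^ 2)
        (linf (ℓ t) * intervalMax ℓ 1 t) (fun i _ => by
          have ha1 := my_abs_le_linf (ℓ t) i
          have ha2 : linf (ℓ t) ≤ intervalMax ℓ 1 t := my_le_intervalMax ℓ htl le_rfl
          calc (ℓ t i) ^ 2 = |ℓ t i| * |ℓ t i| := by rw [abs_mul_abs_self]; ring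
            _ ≤ |ℓ t i| * linf (ℓ t) := mul_le_mul_of_nonneg_left ha1 (abs_nonneg _)
            _ ≤ linf (ℓ t) * intervalMax ℓ 1 t :=
                mul_le_mul ha1 ha2 (my_linf_nonneg _) (le_trans (abs_nonneg _) ha1))
      simpa [Finset.card_univ, nsmul_eq_mul] using hb
    have hηu : (1 / u) * u = 1 := one_div_mul_cancel hu.ne'
    set X := dotp (ℓ t) (fun j => qh t j - q j) with hX_def
    set S := ∑ i, (ℓ t i) ^ 2 with hS_def
    have hXle : X ≤ u / 2 * (sqdist (qh t) q - sqdist (qh (t + 1)) q) + (1 / u) * S / 2 := by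
      have hmul := mul_le_mul_of_nonneg_left hcontract (by positivity : (0:ℝ) ≤ u / 2)
      have e1 : u / 2 * (sqdist (qh t) q - 2 * (1 / u) * X + (1 / u) ^ 2 * S)
          = u / 2 * sqdist (qh t) q - ((1 / u) * u) * X
            + ((1 / u) * u) * ((1 / u) * S) / 2 := by ring
      rw [hηu, one_mul, one_mul] at e1
      rw [e1] at hmul
      linarith
    have hterm : (1 / u) * S / 2 ≤ (d : ℝ) * linf (ℓ t) / (2 * (C * Real.sqrt T)) := by
      have h3 : (1 / u) * S / 2 = S / (2 * u) := by ring
      have h4 : S / (2 * u) ≤ ((d : ℝ) * (linf (ℓ t) * intervalMax ℓ 1 t)) / (2 * u) := by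
        exact (div_le_div_iff_of_pos_right (by linarith : (0:ℝ) < 2 * u)).2 hS
      have h5 : ((d : ℝ) * (linf (ℓ t) * intervalMax ℓ 1 t)) / (2 * u)
          = (d : ℝ) * linf (ℓ t) / (2 * (C * Real.sqrt T)) := by
        rw [hu_def]
        field_simp
      linarith
    have hufix : u / 2 * (sqdist (qh t) q - sqdist (qh (t + 1)) q)
        = intervalMax ℓ 1 t * (C * Real.sqrt T) / 2
          * (sqdist (qh t) q - sqdist (qh (t + 1)) q) := by
      rw [hu_def]; ring
    rw [hsplit]
    rw [hufix] at hXle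
    linarith
  -- sum everything
  have hsum := Finset.sum_le_sum step
  rw [Finset.sum_add_distrib, Finset.sum_add_distrib] at hsum
  -- term 1
  have hterm1 : ∑ t ∈ Finset.Icc t₁ t₂,
      intervalMax ℓ t₁ t₂ * l1 (fun j => qtrue t j - qh t j) ≤ intervalMax ℓ t₁ t₂ * E := by
    rw [← Finset.mul_sum]
    apply mul_le_mul_of_nonneg_left _ hM
    calc ∑ t ∈ Finset.Icc t₁ t₂, l1 (fun j => qtrue t j - qh t j)
        ≤ ∑ t ∈ Finset.Icc 1 T, l1 (fun j => qtrue t j - qh t j) :=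
          Finset.sum_le_sum_of_subset_of_nonneg (Finset.Icc_subset_Icc h1 h2T)
            (fun i _ _ => my_l1_nonneg _)
      _ ≤ E := hdiff
  -- term 2 (telescoping with Abel)
  have hterm2 : ∑ t ∈ Finset.Icc t₁ t₂,
      intervalMax ℓ 1 t * (C * Real.sqrt T) / 2
        * (sqdist (qh t) q - sqdist (qh (t + 1)) q)
      ≤ intervalMax ℓ 1 t₂ * L * C * Real.sqrt T := by
    have habel := my_abel (fun t => intervalMax ℓ 1 t * (C * Real.sqrt T) / 2)
        (fun t => sqdist (qh t) q) (2 * L) t₁ t₂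
        (fun t ht _ => by
          have := my_intervalMax_nonneg ℓ (le_trans h1 ht)
          positivity)
        (fun a b ha hab hbN => by
          have hmono := my_intervalMax_mono ℓ (le_trans h1 ha) hab
          have := mul_le_mul_of_nonneg_right hmono hs.le
          linarith)
        (fun t ht ht' => hDb t (le_trans h1 ht) (by omega))
        t₂ h12 le_rfl
    have ha2 : 0 ≤ intervalMax ℓ 1 t₂ * (C * Real.sqrt T) / 2 := by
      have := my_intervalMax_nonneg ℓ (le_trans h1 h12)
      positivity
    have hD2 := hDb (t₂ + 1) (by omega) (by omega)
    have : intervalMax ℓ 1 t₂ * (C * Real.sqrt T) / 2 * (2 * L - sqdist (qh (t₂ + 1)) q)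
        ≤ intervalMax ℓ 1 t₂ * (C * Real.sqrt T) / 2 * (2 * L) := by
      apply mul_le_mul_of_nonneg_left _ ha2
      linarith [hD2.1]
    calc ∑ t ∈ Finset.Icc t₁ t₂, intervalMax ℓ 1 t * (C * Real.sqrt T) / 2
          * (sqdist (qh t) q - sqdist (qh (t + 1)) q)
        ≤ intervalMax ℓ 1 t₂ * (C * Real.sqrt T) / 2 * (2 * L - sqdist (qh (t₂ + 1)) q) := habel
      _ ≤ intervalMax ℓ 1 t₂ * (C * Real.sqrt T) / 2 * (2 * L) := this
      _ = intervalMax ℓ 1 t₂ * L * C * Real.sqrt T := by ring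
  -- term 3
  have hterm3 : ∑ t ∈ Finset.Icc t₁ t₂, (d : ℝ) * linf (ℓ t) / (2 * (C * Real.sqrt T))
      ≤ intervalMax ℓ t₁ t₂ * (d / 2) * ((t₂ : ℝ) - t₁ + 1) / (C * Real.sqrt T) := by
    have hb : ∀ t ∈ Finset.Icc t₁ t₂,
        (d : ℝ) * linf (ℓ t) / (2 * (C * Real.sqrt T))
          ≤ (d : ℝ) * intervalMax ℓ t₁ t₂ / (2 * (C * Real.sqrt T)) := by
      intro t ht
      rw [Finset.mem_Icc] at ht
      have hx := my_le_intervalMax ℓ ht.1 ht.2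
      have h2 : (d : ℝ) * linf (ℓ t) ≤ (d : ℝ) * intervalMax ℓ t₁ t₂ :=
        mul_le_mul_of_nonneg_left hx (Nat.cast_nonneg d)
      exact (div_le_div_iff_of_pos_right (by linarith : (0:ℝ) < 2 * (C * Real.sqrt T))).2 h2
    calc ∑ t ∈ Finset.Icc t₁ t₂, (d : ℝ) * linf (ℓ t) / (2 * (C * Real.sqrt T))
        ≤ ∑ _t ∈ Finset.Icc t₁ t₂,
            (d : ℝ) * intervalMax ℓ t₁ t₂ / (2 * (C * Real.sqrt T)) := Finset.sum_le_sum hb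
      _ = ((t₂ + 1 - t₁ : ℕ) : ℝ) * ((d : ℝ) * intervalMax ℓ t₁ t₂ / (2 * (C * Real.sqrt T))) := by
          rw [Finset.sum_const, Nat.card_Icc, nsmul_eq_mul]
      _ = intervalMax ℓ t₁ t₂ * (d / 2) * ((t₂ : ℝ) - t₁ + 1) / (C * Real.sqrt T) := by
          rw [Nat.cast_sub (by omega : t₁ ≤ t₂ + 1)]
          push_cast
          field_simp
          ring
  linarith
end

section
/- Fix integers T ≥ 1, m ≥ 1, d ≥ 1, a real L ≥ 1 with L ≤ d, and δ ∈ (0,1). Set C := 5d/L and η := 1/(100·m·d·√(T·ln(T²/δ))). Let ρ ∈ (0,L] satisfy ρ ≥ T^{−1/8}·L·√(20m). For t ∈ {1,…,T+1} let K_t ⊆ { q ∈ ℝ^d : 0 ≤ q_j ≤ 1 for all j, Σ_j q_j ≤ L } be nonempty closed convex sets, and for t ∈ {1,…,T} let r_t ∈ [0,1]^d and let G_t ∈ ℝ^{d×m} have all entries in [−1,1]. Suppose there exists q° ∈ ⋂_t K_t with (G_tᵀq°)_i ≤ −ρ for all t ∈ {1,…,T} and all i ∈ {1,…,m}. Define the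 coupled iterates: q̂_1 ∈ K_1, λ_1 = 0 ∈ ℝ^m; for each t, ℓ_t := G_t λ_t − r_t, ℓ̄_t := max_{τ ≤ t} ‖ℓ_τ‖_∞ (assumed positive for all t), η_t := 1/(ℓ̄_t C √T), q̂_{t+1} := Π_{K_{t+1}}(q̂_t − η_t ℓ_t), and λ_{t+1} := Π_{[0,T^{1/4}]^m}(λ_t + η·G_tᵀq̂_t). Then ‖λ_t‖₁ ≤ 20·m·L²/ρ² for every t ∈ {1,…,T+1}. -/
open Finset Matrix

section Helpers
variable {n : ℕ}

lemma sqdist_nonneg' (x y : Fin n → ℝ) : 0 ≤ sqdist x y :=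
  Finset.sum_nonneg fun _ _ => sq_nonneg _

lemma proj_contract {K : Set (Fin n → ℝ)} (hK : Convex ℝ K) {p z c : Fin n → ℝ}
    (hz : IsEuclidProj K p z) (hc : c ∈ K) : sqdist z c ≤ sqdist p c := by
  obtain ⟨hzK, hmin⟩ := hz
  set A : ℝ := ∑ i, (z i - p i) * (c i - z i) with hA
  set Bq : ℝ := ∑ i, (c i - z i) ^ 2 with hB
  have hBq : 0 ≤ Bq := Finset.sum_nonneg fun _ _ => sq_nonneg _
  have key : ∀ θ : ℝ, 0 < θ → θ ≤ 1 → 0 ≤ 2 * A + θ * Bq := by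
    intro θ hθ0 hθ1
    have hmem : (fun i => z i + θ * (c i - z i)) ∈ K := by
      have h := hK hzK hc (a := 1 - θ) (b := θ) (by linarith) (le_of_lt hθ0) (by ring)
      convert h using 1
      funext i
      simp only [Pi.add_apply, Pi.smul_apply, smul_eq_mul]
      ring
    have hexp : sqdist (fun i => z i + θ * (c i - z i)) p
        = sqdist z p + θ * (2 * A) + θ ^ 2 * Bq := by
      simp only [sqdist, hA, hB, Finset.mul_sum, ← Finset.sum_add_distrib]
      exact Finset.sum_congr rfl fun i _ => by ring
    have h2 := hmin _ hmem
    rw [hexp] at h2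
    have h0 : 0 ≤ θ * (2 * A + θ * Bq) := by nlinarith
    exact (mul_nonneg_iff_of_pos_left hθ0).mp h0
  have hA0 : 0 ≤ A := by
    by_contra h
    push_neg at h
    have hθpos : 0 < min 1 (-A / (Bq + 1)) :=
      lt_min one_pos (div_pos (by linarith) (by linarith))
    have h1 := key _ hθpos (min_le_left _ _)
    have h2 : min 1 (-A / (Bq + 1)) * Bq ≤ (-A / (Bq + 1)) * Bq :=
      mul_le_mul_of_nonneg_right (min_le_right _ _) hBq
    have h3 : (-A / (Bq + 1)) * Bq ≤ -A := by
      rw [div_mul_eq_mul_div, div_le_iff₀ (by linarith)]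
      nlinarith
    linarith
  have expand : sqdist p c = sqdist p z + Bq + 2 * A := by
    simp only [sqdist, hA, hB, Finset.mul_sum, ← Finset.sum_add_distrib]
    exact Finset.sum_congr rfl fun i _ => by ring
  have hzc : sqdist z c = Bq := Finset.sum_congr rfl fun i _ => by ring
  have := sqdist_nonneg' p z
  rw [expand, hzc]; linarith

lemma l1_nonneg' (x : Fin n → ℝ) : 0 ≤ l1 x :=
  Finset.sum_nonneg fun _ _ => abs_nonneg _

lemma sqrt_sum_sq_le_l1 (x : Fin n → ℝ) : Real.sqrt (∑ i, x i ^ 2) ≤ l1 x := by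
  have h : ∑ i, x i ^ 2 ≤ (l1 x) ^ 2 := by
    have h2 : ∀ i : Fin n, x i ^ 2 = |x i| * |x i| := fun i => by
      rw [← abs_mul, abs_of_nonneg (mul_self_nonneg _), sq]
    calc ∑ i, x i ^ 2 = ∑ i, |x i| * |x i| := Finset.sum_congr rfl fun i _ => h2 i
      _ ≤ ∑ i : Fin n, |x i| * (∑ j, |x j|) := Finset.sum_le_sum fun i _ =>
          mul_le_mul_of_nonneg_left
            (Finset.single_le_sum (fun j _ => abs_nonneg (x j)) (Finset.mem_univ i))
            (abs_nonneg _)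
      _ = (l1 x) ^ 2 := by rw [l1, ← Finset.sum_mul, sq]
  calc Real.sqrt (∑ i, x i ^ 2) ≤ Real.sqrt ((l1 x) ^ 2) := Real.sqrt_le_sqrt h
    _ = l1 x := Real.sqrt_sq (l1_nonneg' x)

lemma l1_le_sqrt_card (x : Fin n → ℝ) :
    l1 x ≤ Real.sqrt n * Real.sqrt (∑ i, x i ^ 2) := by
  have h : (l1 x) ^ 2 ≤ (n : ℝ) * ∑ i, x i ^ 2 := by
    have := sq_sum_le_card_mul_sum_sq (s := Finset.univ) (f := fun i => |x i|)
    simpa [l1, sq_abs] using this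
  calc l1 x = Real.sqrt ((l1 x) ^ 2) := (Real.sqrt_sq (l1_nonneg' x)).symm
    _ ≤ Real.sqrt ((n : ℝ) * ∑ i, x i ^ 2) := Real.sqrt_le_sqrt h
    _ = Real.sqrt n * Real.sqrt (∑ i, x i ^ 2) := Real.sqrt_mul (by positivity) _

lemma abs_le_linf (x : Fin n → ℝ) (j : Fin n) : |x j| ≤ linf x :=
  le_ciSup (f := fun i => |x i|) (Set.Finite.bddAbove (Set.finite_range _)) j

lemma linf_le [Nonempty (Fin n)] {x : Fin n → ℝ} {c : ℝ} (h : ∀ j, |x j| ≤ c) :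
    linf x ≤ c := ciSup_le h

lemma le_intervalMax {ℓ : ℕ → Fin n → ℝ} {a b τ : ℕ} (h1 : a ≤ τ) (h2 : τ ≤ b) :
    linf (ℓ τ) ≤ intervalMax ℓ a b :=
  le_csSup ((Set.finite_Icc a b).image _).bddAbove ⟨τ, ⟨h1, h2⟩, rfl⟩

lemma intervalMax_le {ℓ : ℕ → Fin n → ℝ} {a b : ℕ} {c : ℝ} (hab : a ≤ b)
    (h : ∀ τ, a ≤ τ → τ ≤ b → linf (ℓ τ) ≤ c) : intervalMax ℓ a b ≤ c :=
  csSup_le ⟨_, ⟨a, ⟨le_refl a, hab⟩, rfl⟩⟩ (by rintro x ⟨τ, ⟨h1, h2⟩, rfl⟩; exact h τ h1 h2)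

lemma intervalMax_mono {ℓ : ℕ → Fin n → ℝ} {a b b' : ℕ} (hab : a ≤ b) (hbb : b ≤ b') :
    intervalMax ℓ a b ≤ intervalMax ℓ a b' :=
  csSup_le_csSup ((Set.finite_Icc a b').image _).bddAbove
    ⟨_, ⟨a, ⟨le_refl a, hab⟩, rfl⟩⟩
    (Set.image_mono (Set.Icc_subset_Icc_right hbb))

lemma le_of_sq_le_sq' {a b : ℝ} (hb : 0 ≤ b) (h : a ^ 2 ≤ b ^ 2) : a ≤ b := by
  nlinarith [sq_nonneg (a - b), sq_nonneg (a + b)]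

lemma sq_le_of_abs_le {a c : ℝ} (h : |a| ≤ c) : a ^ 2 ≤ c ^ 2 := by
  nlinarith [abs_nonneg a, sq_abs a]

end Helpers

set_option maxHeartbeats 1000000 in
/-- Deterministic (adversarial-constraint) Lagrange-multiplier bound for PDGD-OPS:
under the feasibility condition `ρ ≥ T^{-1/8} L √(20m)`, the iterates satisfy
`‖λ_t‖₁ ≤ 20mL²/ρ²` for every `t`. -/
theorem stmt8 {d m T : ℕ} (hT : 1 ≤ T) (hm : 1 ≤ m) (hd : 1 ≤ d)
    (L : ℝ) (hL1 : 1 ≤ L) (hLd : L ≤ d)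
    (δ : ℝ) (hδ0 : 0 < δ) (hδ1 : δ < 1)
    (C η : ℝ) (hC : C = 5 * d / L)
    (hη : η = 1 / (100 * m * d * Real.sqrt (T * Real.log ((T : ℝ) ^ 2 / δ))))
    (ρ : ℝ) (hρ0 : 0 < ρ) (hρL : ρ ≤ L)
    (hρcond : ρ ≥ (T : ℝ) ^ (-(1 / 8 : ℝ)) * L * Real.sqrt (20 * m))
    (K : ℕ → Set (Fin d → ℝ))
    (hKne : ∀ t ∈ Finset.Icc 1 (T + 1), (K t).Nonempty)
    (hKcl : ∀ t ∈ Finset.Icc 1 (T + 1), IsClosed (K t))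
    (hKcv : ∀ t ∈ Finset.Icc 1 (T + 1), Convex ℝ (K t))
    (hKsub : ∀ t ∈ Finset.Icc 1 (T + 1),
      K t ⊆ {q : Fin d → ℝ | (∀ j, 0 ≤ q j ∧ q j ≤ 1) ∧ ∑ j, q j ≤ L})
    (r : ℕ → Fin d → ℝ) (hr : ∀ t ∈ Finset.Icc 1 T, ∀ j, r t j ∈ Set.Icc (0 : ℝ) 1)
    (G : ℕ → Matrix (Fin d) (Fin m) ℝ)
    (hG : ∀ t ∈ Finset.Icc 1 T, ∀ j i, |G t j i| ≤ 1)
    (qfeas : Fin d → ℝ) (hqfeasK : ∀ t ∈ Finset.Icc 1 (T + 1), qfeas ∈ K t)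
    (hqfeas : ∀ t ∈ Finset.Icc 1 T, ∀ i, ((G t)ᵀ *ᵥ qfeas) i ≤ -ρ)
    (qh : ℕ → Fin d → ℝ) (lam : ℕ → Fin m → ℝ)
    (hqh1 : qh 1 ∈ K 1) (hlam1 : ∀ i, lam 1 i = 0)
    (ℓ : ℕ → Fin d → ℝ)
    (hℓ : ∀ t ∈ Finset.Icc 1 T, ℓ t = fun j => (G t *ᵥ lam t) j - r t j)
    (hpos : ∀ t ∈ Finset.Icc 1 T, 0 < intervalMax ℓ 1 t)
    (hqupd : ∀ t ∈ Finset.Icc 1 T,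
      IsEuclidProj (K (t + 1))
        (fun j => qh t j - (1 / (intervalMax ℓ 1 t * C * Real.sqrt T)) * ℓ t j)
        (qh (t + 1)))
    (hlupd : ∀ t ∈ Finset.Icc 1 T,
      IsEuclidProj {l : Fin m → ℝ | ∀ i, l i ∈ Set.Icc (0 : ℝ) ((T : ℝ) ^ ((1 : ℝ) / 4))}
        (fun i => lam t i + η * ((G t)ᵀ *ᵥ qh t) i) (lam (t + 1))) :
    ∀ t ∈ Finset.Icc 1 (T + 1), l1 (lam t) ≤ 20 * m * L ^ 2 / ρ ^ 2 := by
  have hL0 : (0:ℝ) < L := lt_of_lt_of_le one_pos hL1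
  have hd0 : (0:ℝ) < d := by exact_mod_cast Nat.lt_of_lt_of_le Nat.zero_lt_one hd
  have hm0 : (0:ℝ) < m := by exact_mod_cast Nat.lt_of_lt_of_le Nat.zero_lt_one hm
  have hm1 : (1:ℝ) ≤ m := by exact_mod_cast hm
  have hd1 : (1:ℝ) ≤ d := by exact_mod_cast hd
  have hT0 : (0:ℝ) < T := by exact_mod_cast Nat.lt_of_lt_of_le Nat.zero_lt_one hT
  have hρ2 : (0:ℝ) < ρ ^ 2 := by positivity
  have hLρ : ρ ^ 2 ≤ L ^ 2 := by nlinarith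
  have hB20m : (20:ℝ) * m ≤ 20 * m * L ^ 2 / ρ ^ 2 := by
    rw [le_div_iff₀ hρ2]; nlinarith
  have hq4 : (0:ℝ) ≤ (T:ℝ) ^ ((1:ℝ)/4) := Real.rpow_nonneg (le_of_lt hT0) _
  -- λ_t is in the box for t ≥ 2, and nonneg everywhere
  have hlam_mem : ∀ t ∈ Finset.Icc 1 (T+1), ∀ i,
      0 ≤ lam t i ∧ lam t i ≤ (T:ℝ) ^ ((1:ℝ)/4) := by
    intro t ht i
    simp only [Finset.mem_Icc] at ht
    rcases Nat.lt_or_ge t 2 with h2 | h2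
    · have : t = 1 := by omega
      subst this
      simp only [hlam1 i]
      exact ⟨le_refl 0, hq4⟩
    · obtain ⟨u, rfl⟩ : ∃ u, t = u + 1 := ⟨t - 1, by omega⟩
      have hu : u ∈ Finset.Icc 1 T := by simp only [Finset.mem_Icc]; omega
      exact (hlupd u hu).1 i
  -- the easy case : T^{1/4} ≤ 20
  rcases le_or_gt ((T:ℝ) ^ ((1:ℝ)/4)) 20 with hsmall | hbig
  · intro t ht
    have h1 : l1 (lam t) ≤ (m:ℝ) * 20 := by
      have : ∀ i, |lam t i| ≤ (20:ℝ) := by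
        intro i
        obtain ⟨h0, hub⟩ := hlam_mem t ht i
        rw [abs_of_nonneg h0]; exact le_trans hub hsmall
      calc l1 (lam t) = ∑ i, |lam t i| := rfl
        _ ≤ ∑ _i : Fin m, (20:ℝ) := Finset.sum_le_sum fun i _ => this i
        _ = (m:ℝ) * 20 := by simp [Finset.sum_const, mul_comm]
    linarith [hB20m]
  -- the main case
  -- basic log bounds
  have hlog2 : (0.6931471803 : ℝ) < Real.log 2 := Real.log_two_gt_d9
  have hlogT : (11:ℝ) ≤ Real.log T := by
    have h20 : Real.log 20 < Real.log ((T:ℝ) ^ ((1:ℝ)/4)) :=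
      Real.log_lt_log (by norm_num) hbig
    rw [Real.log_rpow hT0] at h20
    have h16 : Real.log 16 ≤ Real.log 20 := Real.log_le_log (by norm_num) (by norm_num)
    have h16' : Real.log 16 = 4 * Real.log 2 := by
      rw [show (16:ℝ) = 2 ^ (4:ℕ) by norm_num, Real.log_pow]; push_cast; ring
    nlinarith
  have hlogm : (22:ℝ) ≤ Real.log ((T:ℝ) ^ 2 / δ) := by
    have hδlog : Real.log δ ≤ 0 := Real.log_nonpos (le_of_lt hδ0) (le_of_lt hδ1)
    rw [Real.log_div (by positivity) (ne_of_gt hδ0), Real.log_pow]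
    push_cast; nlinarith
  obtain ⟨s, hs_def⟩ : ∃ s : ℝ, s = Real.sqrt ((T:ℝ) * Real.log ((T : ℝ) ^ 2 / δ)) := ⟨_, rfl⟩
  obtain ⟨rT, hrT_def⟩ : ∃ rT : ℝ, rT = Real.sqrt (T:ℝ) := ⟨_, rfl⟩
  have hs2 : s ^ 2 = (T:ℝ) * Real.log ((T : ℝ) ^ 2 / δ) := by
    rw [hs_def]; exact Real.sq_sqrt (by nlinarith)
  have hs0 : 0 < s := by rw [hs_def]; exact Real.sqrt_pos.mpr (by nlinarith)
  have hrT2 : rT ^ 2 = (T:ℝ) := by rw [hrT_def]; exact Real.sq_sqrt (le_of_lt hT0)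
  have hrT0 : 0 < rT := by rw [hrT_def]; exact Real.sqrt_pos.mpr hT0
  have hsT : 22 * (T:ℝ) ≤ s ^ 2 := by nlinarith
  have hrTs : 4.6 * rT ≤ s := by nlinarith [sq_nonneg (s - 4.6 * rT), sq_nonneg (s + 4.6 * rT)]
  have hη0 : 0 < η := by rw [hη]; positivity
  have hηval : η * (100 * m * d * s) = 1 := by
    rw [hη, hs_def]; field_simp
  have hC0 : 0 < C := by rw [hC]; positivity
  have hLC : L * C = 5 * d := by rw [hC]; field_simp
  -- abbreviations
  obtain ⟨rm, hrm_def⟩ : ∃ rm : ℝ, rm = Real.sqrt (m:ℝ) := ⟨_, rfl⟩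
  have hrm2 : rm ^ 2 = (m:ℝ) := by rw [hrm_def]; exact Real.sq_sqrt (le_of_lt hm0)
  have hrm1 : 1 ≤ rm := by nlinarith [Real.sqrt_nonneg (m:ℝ)]
  have hrm0 : 0 < rm := lt_of_lt_of_le one_pos hrm1
  obtain ⟨B2, hB2_def⟩ : ∃ B2 : ℝ, B2 = 20 * rm * L ^ 2 / ρ ^ 2 := ⟨_, rfl⟩
  have hB2pos : 0 < B2 := by rw [hB2_def]; positivity
  have hB2ge : 20 * rm ≤ B2 := by
    rw [hB2_def, le_div_iff₀ hρ2]; nlinarith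
  have hrmB2 : rm * B2 = 20 * m * L ^ 2 / ρ ^ 2 := by
    rw [hB2_def]; linear_combination (20 * L ^ 2 / ρ ^ 2) * hrm2
  obtain ⟨V, hV_def⟩ : ∃ V : ℕ → ℝ, V = fun τ => ∑ i, lam τ i ^ 2 := ⟨_, rfl⟩
  obtain ⟨W, hW_def⟩ : ∃ W : ℕ → ℝ, W = fun τ => Real.sqrt (V τ) := ⟨_, rfl⟩
  have hV_nonneg : ∀ τ, 0 ≤ V τ := by
    intro τ; rw [hV_def]; exact Finset.sum_nonneg fun _ _ => sq_nonneg _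
  have hW_nonneg : ∀ τ, 0 ≤ W τ := by intro τ; rw [hW_def]; exact Real.sqrt_nonneg _
  have hW_sq : ∀ τ, (W τ) ^ 2 = V τ := by
    intro τ; rw [hW_def]; exact Real.sq_sqrt (hV_nonneg τ)
  have hV1 : V 1 = 0 := by
    rw [hV_def]; exact Finset.sum_eq_zero fun i _ => by rw [hlam1 i]; ring
  have hW1 : W 1 = 0 := by simp only [hW_def]; rw [hV1, Real.sqrt_zero]
  have hl1W : ∀ τ, l1 (lam τ) ≤ rm * W τ := by
    intro τ; rw [hrm_def, hW_def, hV_def]; exact l1_le_sqrt_card (lam τ)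
  have hWl1 : ∀ τ, W τ ≤ l1 (lam τ) := by
    intro τ; rw [hW_def, hV_def]; exact sqrt_sum_sq_le_l1 (lam τ)
  -- q-iterate membership and bounds
  have hqmem : ∀ τ ∈ Finset.Icc 1 (T+1), qh τ ∈ K τ := by
    intro τ hτ
    simp only [Finset.mem_Icc] at hτ
    rcases Nat.lt_or_ge τ 2 with h2 | h2
    · have : τ = 1 := by omega
      subst this; exact hqh1
    · obtain ⟨u, rfl⟩ : ∃ u, τ = u + 1 := ⟨τ - 1, by omega⟩
      exact (hqupd u (by simp only [Finset.mem_Icc]; omega)).1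
  have hqbox : ∀ τ ∈ Finset.Icc 1 (T+1),
      (∀ j, 0 ≤ qh τ j ∧ qh τ j ≤ 1) ∧ ∑ j, qh τ j ≤ L := fun τ hτ =>
    hKsub τ hτ (hqmem τ hτ)
  have hqfbox : (∀ j, 0 ≤ qfeas j ∧ qfeas j ≤ 1) ∧ ∑ j, qfeas j ≤ L :=
    hKsub 1 (Finset.mem_Icc.mpr ⟨le_refl 1, by omega⟩) (hqfeasK 1 (Finset.mem_Icc.mpr ⟨le_refl 1, by omega⟩))
  haveI : Nonempty (Fin d) := ⟨⟨0, hd⟩⟩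
  -- rewrite the primal update in terms of rT
  rw [show Real.sqrt (T:ℝ) = rT from hrT_def.symm] at hqupd
  -- A: bound on the constraint-value vector
  have hg_abs : ∀ τ ∈ Finset.Icc 1 T, ∀ i, |((G τ)ᵀ *ᵥ qh τ) i| ≤ L := by
    intro τ hτ i
    have hτ' : τ ∈ Finset.Icc 1 (T+1) := by
      simp only [Finset.mem_Icc] at *; omega
    obtain ⟨hq01, hqsum⟩ := hqbox τ hτ'
    have hrw : ((G τ)ᵀ *ᵥ qh τ) i = ∑ j, G τ j i * qh τ j := by
      simp [Matrix.mulVec, dotProduct, Matrix.transpose_apply]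
    rw [hrw]
    calc |∑ j, G τ j i * qh τ j| ≤ ∑ j, |G τ j i * qh τ j| :=
          Finset.abs_sum_le_sum_abs _ _
      _ ≤ ∑ j, qh τ j := Finset.sum_le_sum (fun j _ => by
          rw [abs_mul, abs_of_nonneg (hq01 j).1]
          exact mul_le_of_le_one_left (hq01 j).1 (hG τ hτ j i))
      _ ≤ L := hqsum
  -- the dual feasible box
  have hboxconv : Convex ℝ {l : Fin m → ℝ | ∀ i, l i ∈ Set.Icc (0:ℝ) ((T:ℝ) ^ ((1:ℝ)/4))} := by
    intro x hx y hy a b ha hb hab i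
    exact (convex_Icc (0:ℝ) ((T:ℝ) ^ ((1:ℝ)/4))) (hx i) (hy i) ha hb hab
  have h0box : (fun _ : Fin m => (0:ℝ)) ∈
      {l : Fin m → ℝ | ∀ i, l i ∈ Set.Icc (0:ℝ) ((T:ℝ) ^ ((1:ℝ)/4))} :=
    fun _ => ⟨le_refl 0, hq4⟩
  -- B: dual step inequality in terms of V
  have hdualV : ∀ τ ∈ Finset.Icc 1 T,
      V (τ+1) ≤ ∑ i, (lam τ i + η * ((G τ)ᵀ *ᵥ qh τ) i) ^ 2 := by
    intro τ hτ
    have h := proj_contract hboxconv (hlupd τ hτ) h0box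
    have e1 : sqdist (lam (τ+1)) (fun _ => 0) = V (τ+1) := by
      simp only [hV_def, sqdist]
      exact Finset.sum_congr rfl fun i _ => by ring
    have e2 : sqdist (fun i => lam τ i + η * ((G τ)ᵀ *ᵥ qh τ) i) (fun _ => 0)
        = ∑ i, (lam τ i + η * ((G τ)ᵀ *ᵥ qh τ) i) ^ 2 := by
      simp only [sqdist]
      exact Finset.sum_congr rfl fun i _ => by ring
    rw [e1, e2] at h
    exact h
  -- expansion of the dual quadratic
  have hdual_expand : ∀ τ, ∑ i, (lam τ i + η * ((G τ)ᵀ *ᵥ qh τ) i) ^ 2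
      = V τ + 2*η*(∑ i, lam τ i * ((G τ)ᵀ *ᵥ qh τ) i)
        + η^2 * (∑ i, ((G τ)ᵀ *ᵥ qh τ) i ^ 2) := by
    intro τ
    simp only [hV_def, Finset.mul_sum, ← Finset.sum_add_distrib]
    exact Finset.sum_congr rfl fun i _ => by ring
  have hgsq : ∀ τ ∈ Finset.Icc 1 T, ∑ i, ((G τ)ᵀ *ᵥ qh τ) i ^ 2 ≤ m * L^2 := by
    intro τ hτ
    calc ∑ i, ((G τ)ᵀ *ᵥ qh τ) i ^ 2 ≤ ∑ _i : Fin m, L^2 :=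
        Finset.sum_le_sum fun i _ => by
          exact sq_le_of_abs_le (hg_abs τ hτ i)
      _ = m * L^2 := by simp [Finset.sum_const]
  -- C: per-step growth of W
  have hWstep : ∀ τ ∈ Finset.Icc 1 T, W (τ+1) ≤ W τ + η * (rm * L) := by
    intro τ hτ
    have hB := hdualV τ hτ
    rw [hdual_expand τ] at hB
    have hq2 := hgsq τ hτ
    have hCS : (∑ i, lam τ i * ((G τ)ᵀ *ᵥ qh τ) i)^2
        ≤ V τ * (∑ i, ((G τ)ᵀ *ᵥ qh τ) i ^ 2) := by
      rw [hV_def]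
      exact Finset.sum_mul_sq_le_sq_mul_sq Finset.univ _ _
    have hVW := hW_sq τ
    have hWn := hW_nonneg τ
    have hdot_le : ∑ i, lam τ i * ((G τ)ᵀ *ᵥ qh τ) i ≤ W τ * (rm * L) := by
      have hVq : V τ * (∑ i, ((G τ)ᵀ *ᵥ qh τ) i ^ 2) ≤ (W τ * (rm * L))^2 := by
        have h1 : V τ * (∑ i, ((G τ)ᵀ *ᵥ qh τ) i ^ 2) ≤ V τ * (m * L^2) :=
          mul_le_mul_of_nonneg_left hq2 (hV_nonneg τ)
        have : (W τ * (rm * L))^2 = V τ * (m * L^2) := by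
          rw [mul_pow, mul_pow, hVW, hrm2]
        linarith
      exact le_of_sq_le_sq' (mul_nonneg hWn (mul_nonneg (le_of_lt hrm0) (le_of_lt hL0)))
        (le_trans hCS hVq)
    have hV2 : V (τ+1) ≤ (W τ + η * (rm * L))^2 := by
      have hexp : (W τ + η * (rm * L))^2
          = V τ + 2*η*(W τ * (rm*L)) + η^2*(m*L^2) := by
        rw [← hVW, ← hrm2]; ring
      have e1 : 2*η*(∑ i, lam τ i * ((G τ)ᵀ *ᵥ qh τ) i) ≤ 2*η*(W τ * (rm*L)) :=
        mul_le_mul_of_nonneg_left hdot_le (by linarith only [hη0])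
      have e2 : η^2 * (∑ i, ((G τ)ᵀ *ᵥ qh τ) i ^ 2) ≤ η^2*(m*L^2) :=
        mul_le_mul_of_nonneg_left hq2 (sq_nonneg η)
      linarith only [hB, e1, e2, hexp]
    calc W (τ+1) = Real.sqrt (V (τ+1)) := by rw [hW_def]
      _ ≤ Real.sqrt ((W τ + η * (rm * L))^2) := Real.sqrt_le_sqrt hV2
      _ = W τ + η * (rm * L) := Real.sqrt_sq (by positivity)
  -- pointwise loss bounds
  have hl_abs : ∀ τ ∈ Finset.Icc 1 T, ∀ j, |ℓ τ j| ≤ l1 (lam τ) + 1 := by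
    intro τ hτ j
    simp only [hℓ τ hτ]
    have h1 : |(G τ *ᵥ lam τ) j| ≤ l1 (lam τ) := by
      have hrw : (G τ *ᵥ lam τ) j = ∑ i, G τ j i * lam τ i := by
        simp [Matrix.mulVec, dotProduct]
      rw [hrw]
      calc |∑ i, G τ j i * lam τ i| ≤ ∑ i, |G τ j i * lam τ i| :=
            Finset.abs_sum_le_sum_abs _ _
        _ ≤ ∑ i, |lam τ i| := Finset.sum_le_sum fun i _ => by
            rw [abs_mul]
            exact mul_le_of_le_one_left (abs_nonneg _) (hG τ hτ j i)
        _ = l1 (lam τ) := rfl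
    have h2 : |r τ j| ≤ 1 := by
      obtain ⟨ha, hb⟩ := hr τ hτ j
      rw [abs_of_nonneg ha]; exact hb
    calc |(G τ *ᵥ lam τ) j - r τ j| = |(G τ *ᵥ lam τ) j + -(r τ j)| := by
          rw [sub_eq_add_neg]
      _ ≤ |(G τ *ᵥ lam τ) j| + |-(r τ j)| := abs_add_le _ _
      _ = |(G τ *ᵥ lam τ) j| + |r τ j| := by rw [abs_neg]
      _ ≤ l1 (lam τ) + 1 := add_le_add h1 h2
  have hlinf_le : ∀ τ ∈ Finset.Icc 1 T, linf (ℓ τ) ≤ l1 (lam τ) + 1 :=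
    fun τ hτ => linf_le (hl_abs τ hτ)
  have hl_le_lb : ∀ τ ∈ Finset.Icc 1 T, ∀ j, |ℓ τ j| ≤ intervalMax ℓ 1 τ := by
    intro τ hτ j
    exact le_trans (abs_le_linf (ℓ τ) j)
      (le_intervalMax (Finset.mem_Icc.mp hτ).1 (le_refl τ))
  have hSl : ∀ τ ∈ Finset.Icc 1 T, ∑ j, (ℓ τ j)^2 ≤ d * (intervalMax ℓ 1 τ)^2 := by
    intro τ hτ
    calc ∑ j, (ℓ τ j)^2 ≤ ∑ _j : Fin d, (intervalMax ℓ 1 τ)^2 :=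
        Finset.sum_le_sum fun j _ => sq_le_of_abs_le (hl_le_lb τ hτ j)
      _ = d * (intervalMax ℓ 1 τ)^2 := by simp [Finset.sum_const]
  -- distance to feasible point is bounded
  have hDq : ∀ τ ∈ Finset.Icc 1 (T+1),
      0 ≤ sqdist (qh τ) qfeas ∧ sqdist (qh τ) qfeas ≤ 2*L := by
    intro τ hτ
    refine ⟨sqdist_nonneg' _ _, ?_⟩
    obtain ⟨hq01, hqs⟩ := hqbox τ hτ
    obtain ⟨hf01, hfs⟩ := hqfbox
    calc sqdist (qh τ) qfeas = ∑ j, (qh τ j - qfeas j)^2 := rfl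
      _ ≤ ∑ j, (qh τ j + qfeas j) := Finset.sum_le_sum (fun j _ => by
          have a1 := (hq01 j).1
          have a2 := (hq01 j).2
          have b1 := (hf01 j).1
          have b2 := (hf01 j).2
          nlinarith only [a1, a2, b1, b2, mul_nonneg a1 b1])
      _ = (∑ j, qh τ j) + ∑ j, qfeas j := Finset.sum_add_distrib
      _ ≤ 2*L := by linarith only [hqs, hfs]
  -- transpose dot identity
  have hdot_id : ∀ τ : ℕ, ∀ q : Fin d → ℝ,
      ∑ i, lam τ i * ((G τ)ᵀ *ᵥ q) i = ∑ j, (G τ *ᵥ lam τ) j * q j := by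
    intro τ q
    simp only [Matrix.mulVec, dotProduct, Matrix.transpose_apply,
      Finset.sum_mul, Finset.mul_sum]
    rw [Finset.sum_comm]
    exact Finset.sum_congr rfl fun j _ => Finset.sum_congr rfl fun i _ => by ring
  have hl1_eq : ∀ τ ∈ Finset.Icc 1 (T+1), l1 (lam τ) = ∑ i, lam τ i := by
    intro τ hτ
    exact Finset.sum_congr rfl fun i _ => abs_of_nonneg (hlam_mem τ hτ i).1
  -- D: the key dual dot-product bound
  have hdualdot : ∀ τ ∈ Finset.Icc 1 T,
      ∑ i, lam τ i * ((G τ)ᵀ *ᵥ qh τ) i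
        ≤ dotp (ℓ τ) (fun j => qh τ j - qfeas j) - ρ * l1 (lam τ) + L := by
    intro τ hτ
    have hτ' : τ ∈ Finset.Icc 1 (T+1) := by simp only [Finset.mem_Icc] at *; omega
    obtain ⟨hq01, hqs⟩ := hqbox τ hτ'
    obtain ⟨hf01, hfs⟩ := hqfbox
    have h1 : ∑ i, lam τ i * ((G τ)ᵀ *ᵥ qh τ) i = ∑ j, (G τ *ᵥ lam τ) j * qh τ j :=
      hdot_id τ _
    have h2 : dotp (ℓ τ) (qh τ)
        = ∑ j, (G τ *ᵥ lam τ) j * qh τ j - ∑ j, r τ j * qh τ j := by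
      simp only [dotp, hℓ τ hτ]
      rw [← Finset.sum_sub_distrib]
      exact Finset.sum_congr rfl fun j _ => by ring
    have h3 : ∑ j, r τ j * qh τ j ≤ L := by
      calc ∑ j, r τ j * qh τ j ≤ ∑ j, qh τ j := Finset.sum_le_sum fun j _ =>
            mul_le_of_le_one_left (hq01 j).1 (hr τ hτ j).2
        _ ≤ L := hqs
    have h4 : dotp (ℓ τ) qfeas ≤ -(ρ * l1 (lam τ)) := by
      have e1 : dotp (ℓ τ) qfeas
          = ∑ j, (G τ *ᵥ lam τ) j * qfeas j - ∑ j, r τ j * qfeas j := by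
        simp only [dotp, hℓ τ hτ]
        rw [← Finset.sum_sub_distrib]
        exact Finset.sum_congr rfl fun j _ => by ring
      have e2 : ∑ j, (G τ *ᵥ lam τ) j * qfeas j
          = ∑ i, lam τ i * ((G τ)ᵀ *ᵥ qfeas) i := (hdot_id τ _).symm
      have e3 : ∑ i, lam τ i * ((G τ)ᵀ *ᵥ qfeas) i ≤ ∑ i, lam τ i * (-ρ) :=
        Finset.sum_le_sum fun i _ =>
          mul_le_mul_of_nonneg_left (hqfeas τ hτ i) (hlam_mem τ hτ' i).1
      have e4 : ∑ i, lam τ i * (-ρ) = -(ρ * l1 (lam τ)) := by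
        rw [hl1_eq τ hτ', ← Finset.sum_mul]
        ring
      have e5 : 0 ≤ ∑ j, r τ j * qfeas j := Finset.sum_nonneg fun j _ =>
        mul_nonneg (hr τ hτ j).1 (hf01 j).1
      linarith only [e1, e2, e3, e4, e5]
    have h5 : dotp (ℓ τ) (fun j => qh τ j - qfeas j)
        = dotp (ℓ τ) (qh τ) - dotp (ℓ τ) qfeas := by
      simp only [dotp]
      rw [← Finset.sum_sub_distrib]
      exact Finset.sum_congr rfl fun j _ => by ring
    linarith only [h1, h2, h3, h4, h5]
  -- combined dual drift per step
  have hstep : ∀ τ ∈ Finset.Icc 1 T,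
      V (τ+1) ≤ V τ + 2*η*(dotp (ℓ τ) (fun j => qh τ j - qfeas j))
        - 2*η*ρ*(l1 (lam τ)) + 2*η*L + η^2*(m*L^2) := by
    intro τ hτ
    have hB := hdualV τ hτ
    rw [hdual_expand τ] at hB
    have h1 := hdualdot τ hτ
    have h2 := hgsq τ hτ
    have e1 : 2*η*(∑ i, lam τ i * ((G τ)ᵀ *ᵥ qh τ) i)
        ≤ 2*η*(dotp (ℓ τ) (fun j => qh τ j - qfeas j) - ρ * l1 (lam τ) + L) :=
      mul_le_mul_of_nonneg_left h1 (by linarith only [hη0])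
    have e2 : η^2 * (∑ i, ((G τ)ᵀ *ᵥ qh τ) i ^ 2) ≤ η^2*(m*L^2) :=
      mul_le_mul_of_nonneg_left h2 (sq_nonneg η)
    nlinarith only [hB, e1, e2]
  -- E: primal (OGD) per-step bound
  have hprimal : ∀ τ ∈ Finset.Icc 1 T,
      dotp (ℓ τ) (fun j => qh τ j - qfeas j)
        ≤ (intervalMax ℓ 1 τ * C * rT / 2)
            * (sqdist (qh τ) qfeas - sqdist (qh (τ+1)) qfeas)
          + (L/10) * (intervalMax ℓ 1 τ / rT) := by
    intro τ hτ
    have hτ1' : τ + 1 ∈ Finset.Icc 1 (T+1) := by simp only [Finset.mem_Icc] at *; omega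
    have hlbp := hpos τ hτ
    have hproj := proj_contract (hKcv (τ+1) hτ1') (hqupd τ hτ) (hqfeasK (τ+1) hτ1')
    have hexp : sqdist (fun j => qh τ j - (1 / (intervalMax ℓ 1 τ * C * rT)) * ℓ τ j) qfeas
        = sqdist (qh τ) qfeas
          - 2*(1 / (intervalMax ℓ 1 τ * C * rT))*(dotp (ℓ τ) (fun j => qh τ j - qfeas j))
          + (1 / (intervalMax ℓ 1 τ * C * rT))^2 * (∑ j, (ℓ τ j)^2) := by
      simp only [sqdist, dotp, Finset.mul_sum, ← Finset.sum_add_distrib,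
        ← Finset.sum_sub_distrib]
      exact Finset.sum_congr rfl fun j _ => by ring
    rw [hexp] at hproj
    have hS := hSl τ hτ
    obtain ⟨a, ha_def⟩ : ∃ a : ℝ, a = intervalMax ℓ 1 τ * C * rT := ⟨_, rfl⟩
    rw [← ha_def] at hproj ⊢
    have ha0 : 0 < a := by rw [ha_def]; positivity
    have hX : 2*(1/a)*(dotp (ℓ τ) (fun j => qh τ j - qfeas j))
        ≤ (sqdist (qh τ) qfeas - sqdist (qh (τ+1)) qfeas) + (1/a)^2 * (∑ j, (ℓ τ j)^2) := by
      linarith only [hproj]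
    have hdiv : ∑ j, (ℓ τ j)^2 ≤ d * (intervalMax ℓ 1 τ)^2 := hS
    have hSa : d * (intervalMax ℓ 1 τ)^2 / (2*a) = (L/10) * (intervalMax ℓ 1 τ / rT) := by
      rw [ha_def, hC]
      have h1 : intervalMax ℓ 1 τ ≠ 0 := ne_of_gt hlbp
      have h2 : rT ≠ 0 := ne_of_gt hrT0
      have h3 : L ≠ 0 := ne_of_gt hL0
      have h4 : (d:ℝ) ≠ 0 := ne_of_gt hd0
      field_simp
      ring
    calc dotp (ℓ τ) (fun j => qh τ j - qfeas j)
        = (a/2)*(2*(1/a)*(dotp (ℓ τ) (fun j => qh τ j - qfeas j))) := by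
          field_simp
      _ ≤ (a/2)*((sqdist (qh τ) qfeas - sqdist (qh (τ+1)) qfeas)
            + (1/a)^2 * (∑ j, (ℓ τ j)^2)) :=
          mul_le_mul_of_nonneg_left hX (by positivity)
      _ = (a/2)*(sqdist (qh τ) qfeas - sqdist (qh (τ+1)) qfeas)
            + (∑ j, (ℓ τ j)^2)/(2*a) := by
          field_simp
      _ ≤ (a/2)*(sqdist (qh τ) qfeas - sqdist (qh (τ+1)) qfeas)
            + d * (intervalMax ℓ 1 τ)^2 / (2*a) := by
          have := (div_le_div_iff_of_pos_right (by positivity : (0:ℝ) < 2*a)).mpr hdiv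
          linarith only [this]
      _ = a/2*(sqdist (qh τ) qfeas - sqdist (qh (τ+1)) qfeas)
            + (L/10) * (intervalMax ℓ 1 τ / rT) := by rw [hSa]
  -- numeric preliminaries for the drift argument
  have hT1 : (1:ℝ) ≤ T := by exact_mod_cast hT
  have hs1 : (1:ℝ) ≤ s := by nlinarith only [hs0, hsT, hT1]
  have hηd1 : η * d ≤ 1 := by
    have h100 : (1:ℝ) ≤ 100*m*s := by nlinarith only [hm1, hs1]
    have heq : η*d*(100*m*s) = 1 := by linear_combination hηval
    nlinarith only [heq, h100, mul_pos (mul_pos hη0 hd0) (by positivity : (0:ℝ) < 100*m*s)]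
  have hηL1 : η * L ≤ 1 :=
    le_trans (mul_le_mul_of_nonneg_left hLd (le_of_lt hη0)) hηd1
  have hηmL1 : η * m * L^2 ≤ L := by
    have h1 : η * m * L ≤ η * m * d := by
      have := mul_le_mul_of_nonneg_left hLd (by positivity : (0:ℝ) ≤ η * m)
      linarith only [this]
    have h2 : η * m * d ≤ 1 := by
      have h100 : (1:ℝ) ≤ 100*s := by nlinarith only [hs1]
      have heq : (η*m*d)*(100*s) = 1 := by linear_combination hηval
      nlinarith only [heq, h100, mul_pos (mul_pos (mul_pos hη0 hm0) hd0)
        (by positivity : (0:ℝ) < 100*s)]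
    calc η * m * L^2 = (η * m * L) * L := by ring
      _ ≤ 1 * L := mul_le_mul_of_nonneg_right (le_trans h1 h2) (le_of_lt hL0)
      _ = L := one_mul L
  have hρB2 : 20 * L ≤ ρ * B2 := by
    rw [hB2_def, mul_div_assoc', le_div_iff₀ hρ2]
    nlinarith only [hρL, hρ0, hL0, hrm1,
      mul_nonneg (mul_nonneg (le_of_lt hρ0) (le_of_lt hL0)) (sub_nonneg.mpr hρL),
      mul_nonneg (mul_nonneg (mul_nonneg (le_of_lt hρ0) (le_of_lt hL0)) (le_of_lt hL0))
        (sub_nonneg.mpr hrm1)]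
  have hc1 : 10*η*(d:ℝ)*rT = rT/(10*m*s) := by
    rw [eq_div_iff (by positivity)]
    linear_combination rT * hηval
  have hE1coef : 10*η*(d:ℝ)*rT ≤ 1/(46*m) := by
    rw [hc1, div_le_div_iff₀ (by positivity) (by positivity)]
    nlinarith only [hrTs, hm0]
  -- The main bound by strong induction : W t ≤ B2 for all t ∈ [1, T+1]
  have main : ∀ t, 1 ≤ t → t ≤ T + 1 → W t ≤ B2 := by
    intro t
    induction t using Nat.strong_induction_on with
    | _ t IH =>
      intro ht1 htT1
      rcases Nat.lt_or_ge t 2 with h2 | h2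
      · have : t = 1 := by omega
        subst this
        rw [hW1]; exact le_of_lt hB2pos
      obtain ⟨u, rfl⟩ : ∃ u, t = u + 1 := ⟨t - 1, by omega⟩
      have hu1 : 1 ≤ u := by omega
      have huT : u ≤ T := by omega
      have huIcc : u ∈ Finset.Icc 1 T := Finset.mem_Icc.mpr ⟨hu1, huT⟩
      -- induction hypothesis, reformulated
      have IH' : ∀ τ, 1 ≤ τ → τ ≤ u → W τ ≤ B2 := fun τ hτ1 hτu =>
        IH τ (by omega) hτ1 (by omega)
      have hl1IH : ∀ τ, 1 ≤ τ → τ ≤ u → l1 (lam τ) ≤ rm * B2 := fun τ hτ1 hτu =>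
        le_trans (hl1W τ) (mul_le_mul_of_nonneg_left (IH' τ hτ1 hτu) (le_of_lt hrm0))
      have hlbub : intervalMax ℓ 1 u ≤ rm * B2 + 1 := by
        apply intervalMax_le hu1
        intro τ hτ1 hτu
        have hτIcc : τ ∈ Finset.Icc 1 T := Finset.mem_Icc.mpr ⟨hτ1, le_trans hτu huT⟩
        calc linf (ℓ τ) ≤ l1 (lam τ) + 1 := hlinf_le τ hτIcc
          _ ≤ rm * B2 + 1 := by linarith only [hl1IH τ hτ1 hτu]
      have hlbu_pos : 0 < intervalMax ℓ 1 u := hpos u huIcc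
      -- the last time the iterate was below B2/2
      have hSne : ((Finset.Icc 1 u).filter (fun τ => W τ ≤ B2/2)).Nonempty := by
        refine ⟨1, Finset.mem_filter.mpr ⟨Finset.mem_Icc.mpr ⟨le_refl 1, hu1⟩, ?_⟩⟩
        rw [hW1]; linarith only [hB2pos]
      obtain ⟨t0, ht0mem, ht0max⟩ :
          ∃ t0 ∈ (Finset.Icc 1 u).filter (fun τ => W τ ≤ B2/2),
            ∀ τ ∈ (Finset.Icc 1 u).filter (fun τ => W τ ≤ B2/2), τ ≤ t0 :=
        ⟨_, Finset.max'_mem _ hSne, fun τ hτ => Finset.le_max' _ τ hτ⟩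
      obtain ⟨ht0Icc, ht0W⟩ := Finset.mem_filter.mp ht0mem
      obtain ⟨ht01, ht0u⟩ := Finset.mem_Icc.mp ht0Icc
      have habove : ∀ τ, t0 < τ → τ ≤ u → B2/2 < W τ := by
        intro τ hlt hle
        by_contra hcon
        push_neg at hcon
        have hτmem : τ ∈ (Finset.Icc 1 u).filter (fun τ => W τ ≤ B2/2) :=
          Finset.mem_filter.mpr ⟨Finset.mem_Icc.mpr ⟨by omega, hle⟩, hcon⟩
        exact absurd (ht0max τ hτmem) (not_le.mpr hlt)
      -- easy subcase : t0 = u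
      rcases eq_or_lt_of_le ht0u with hEq | ht0lt
      · subst hEq
        have := hWstep t0 huIcc
        have hstep1 : η * (rm * L) ≤ rm := by
          have : η * (rm * L) = rm * (η * L) := by ring
          rw [this]
          calc rm * (η * L) ≤ rm * 1 := mul_le_mul_of_nonneg_left hηL1 (le_of_lt hrm0)
            _ = rm := mul_one rm
        have hrmB2half : rm ≤ B2/2 := by linarith only [hB2ge, hrm0]
        linarith only [this, ht0W, hstep1, hrmB2half]
      -- drift subcase : t0 < u
      -- the window claim, by induction from t0 to u
      have claim : ∀ v, t0 ≤ v → v ≤ u →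
          V (v+1) ≤ V t0
            + η * (intervalMax ℓ 1 v * C * rT) * (2*L - sqdist (qh (v+1)) qfeas)
            + ((v+1-t0 : ℕ) : ℝ) * (2*η*((L/10)*(intervalMax ℓ 1 u / rT) + L) + η^2*(m*L^2))
            - 2*η*ρ*(∑ τ ∈ Finset.Icc t0 v, l1 (lam τ)) := by
        intro v hv
        induction v, hv using Nat.le_induction with
        | base =>
          intro hvu
          have ht0T : t0 ∈ Finset.Icc 1 T := Finset.mem_Icc.mpr ⟨ht01, by omega⟩
          have ht0T' : t0 ∈ Finset.Icc 1 (T+1) := Finset.mem_Icc.mpr ⟨ht01, by omega⟩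
          have hs1' := hstep t0 ht0T
          have hp1 := hprimal t0 ht0T
          have p1 : 2*η*(dotp (ℓ t0) (fun j => qh t0 j - qfeas j))
              ≤ 2*η*((intervalMax ℓ 1 t0 * C * rT / 2)
                  * (sqdist (qh t0) qfeas - sqdist (qh (t0+1)) qfeas)
                + (L/10) * (intervalMax ℓ 1 t0 / rT)) :=
            mul_le_mul_of_nonneg_left hp1 (by positivity)
          have hlb0pos := hpos t0 ht0T
          have hq3 : 2*η*((L/10)*(intervalMax ℓ 1 t0 / rT))
              ≤ 2*η*((L/10)*(intervalMax ℓ 1 u / rT)) := by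
            apply mul_le_mul_of_nonneg_left _ (by positivity)
            apply mul_le_mul_of_nonneg_left _ (by positivity)
            exact div_le_div_of_nonneg_right (intervalMax_mono ht01 hvu) (le_of_lt hrT0)
          have p2 : 0 ≤ η*(intervalMax ℓ 1 t0 * C * rT)*(2*L - sqdist (qh t0) qfeas) :=
            mul_nonneg (by positivity) (by linarith only [(hDq t0 ht0T').2])
          have hc0 : t0+1-t0 = 1 := by omega
          rw [hc0, Nat.cast_one, Finset.Icc_self, Finset.sum_singleton]
          nlinarith only [hs1', p1, hq3, p2]
        | succ v hv ihv =>
          intro hv1u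
          have hvu : v ≤ u := by omega
          have hcl := ihv hvu
          have hv1T : v+1 ∈ Finset.Icc 1 T := Finset.mem_Icc.mpr ⟨by omega, by omega⟩
          have hv1T' : v+1 ∈ Finset.Icc 1 (T+1) := Finset.mem_Icc.mpr ⟨by omega, by omega⟩
          have hs2' := hstep (v+1) hv1T
          have hp2 := hprimal (v+1) hv1T
          have hlbv1pos := hpos (v+1) hv1T
          have p1 : 2*η*(dotp (ℓ (v+1)) (fun j => qh (v+1) j - qfeas j))
              ≤ 2*η*((intervalMax ℓ 1 (v+1) * C * rT / 2)
                  * (sqdist (qh (v+1)) qfeas - sqdist (qh (v+1+1)) qfeas)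
                + (L/10) * (intervalMax ℓ 1 (v+1) / rT)) :=
            mul_le_mul_of_nonneg_left hp2 (by positivity)
          have hmono : intervalMax ℓ 1 v ≤ intervalMax ℓ 1 (v+1) :=
            intervalMax_mono (by omega) (by omega)
          have hDv1 := hDq (v+1) hv1T'
          have key : 0 ≤ η*C*rT*(intervalMax ℓ 1 (v+1) - intervalMax ℓ 1 v)
              *(2*L - sqdist (qh (v+1)) qfeas) :=
            mul_nonneg (mul_nonneg (by positivity) (sub_nonneg.mpr hmono))
              (sub_nonneg.mpr (by linarith only [hDv1.2]))
          have hq3 : 2*η*((L/10)*(intervalMax ℓ 1 (v+1) / rT))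
              ≤ 2*η*((L/10)*(intervalMax ℓ 1 u / rT)) := by
            apply mul_le_mul_of_nonneg_left _ (by positivity)
            apply mul_le_mul_of_nonneg_left _ (by positivity)
            exact div_le_div_of_nonneg_right (intervalMax_mono (by omega) hv1u) (le_of_lt hrT0)
          have hcount : ((v+1+1-t0 : ℕ) : ℝ) = ((v+1-t0 : ℕ) : ℝ) + 1 := by
            have h' : v+1+1-t0 = (v+1-t0)+1 := by omega
            rw [h']; push_cast; ring
          have hsum : ∑ τ ∈ Finset.Icc t0 (v+1), l1 (lam τ)
              = (∑ τ ∈ Finset.Icc t0 v, l1 (lam τ)) + l1 (lam (v+1)) :=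
            Finset.sum_Icc_succ_top (by omega) _
          rw [hcount, hsum]
          nlinarith only [hcl, hs2', p1, key, hq3]
      -- final assembly at v = u
      have hclaimu := claim u (le_of_lt ht0lt) (le_refl u)
      have hn1' : 1 ≤ u - t0 := by omega
      have hn1 : (1:ℝ) ≤ ((u - t0 : ℕ) : ℝ) := by exact_mod_cast hn1'
      have hcount : ((u+1-t0 : ℕ) : ℝ) = ((u - t0 : ℕ) : ℝ) + 1 := by
        have h' : u+1-t0 = (u-t0)+1 := by omega
        rw [h']; push_cast; ring
      rw [hcount] at hclaimu
      have hu1T' : u+1 ∈ Finset.Icc 1 (T+1) := Finset.mem_Icc.mpr ⟨by omega, by omega⟩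
      have hVt0 : V t0 ≤ (B2/2)^2 := by
        have h := pow_le_pow_left₀ (hW_nonneg t0) ht0W 2
        rw [hW_sq t0] at h
        exact h
      have hA3 : η * (intervalMax ℓ 1 u * C * rT) * (2*L - sqdist (qh (u+1)) qfeas)
          ≤ 10*η*(d:ℝ)*rT*(intervalMax ℓ 1 u) := by
        have hD0 := (hDq (u+1) hu1T').1
        have h1 : η * (intervalMax ℓ 1 u * C * rT) * (2*L - sqdist (qh (u+1)) qfeas)
            ≤ η * (intervalMax ℓ 1 u * C * rT) * (2*L) :=
          mul_le_mul_of_nonneg_left (by linarith only [hD0]) (by positivity)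
        have h2 : η * (intervalMax ℓ 1 u * C * rT) * (2*L)
            = 10*η*(d:ℝ)*rT*(intervalMax ℓ 1 u) := by
          linear_combination (2*η*rT*(intervalMax ℓ 1 u)) * hLC
        linarith only [h1, h2]
      have hE1 : 10*η*(d:ℝ)*rT*(intervalMax ℓ 1 u) ≤ 1/(46*m)*(intervalMax ℓ 1 u) :=
        mul_le_mul_of_nonneg_right hE1coef (le_of_lt hlbu_pos)
      have hrmB2_20 : (20:ℝ) ≤ rm*B2 := by
        nlinarith only [hB2ge, hrm1, hrm0]
      have hB2sq : 20*(rm*B2) ≤ B2^2 := by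
        nlinarith only [hB2ge, hB2pos]
      have hE1B : 1/(46*(m:ℝ))*(intervalMax ℓ 1 u) ≤ B2^2/4 := by
        have h1 : 1/(46*(m:ℝ))*(intervalMax ℓ 1 u) ≤ 1/(46*(m:ℝ))*(rm*B2+1) :=
          mul_le_mul_of_nonneg_left hlbub (by positivity)
        have h2 : 1/(46*(m:ℝ))*(rm*B2+1) ≤ B2^2/4 := by
          rw [show 1/(46*(m:ℝ))*(rm*B2+1) = (rm*B2+1)/(46*m) by ring,
            div_le_div_iff₀ (by positivity) (by norm_num)]
          nlinarith only [hB2sq, hrmB2_20, hm1, hB2pos,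
            mul_nonneg (sub_nonneg.mpr hm1) (sq_nonneg B2)]
        linarith only [h1, h2]
      have hnT : ((u - t0 : ℕ) : ℝ) + 1 ≤ (T:ℝ) := by
        have h' : (u - t0) + 1 ≤ T := by omega
        exact_mod_cast h'
      have hA6 : (((u - t0 : ℕ) : ℝ) + 1)*(2*η*((L/10)*(intervalMax ℓ 1 u / rT)))
          ≤ 10*η*(d:ℝ)*rT*(intervalMax ℓ 1 u) := by
        have h1 : (((u - t0 : ℕ) : ℝ) + 1)*(2*η*((L/10)*(intervalMax ℓ 1 u / rT)))
            ≤ (T:ℝ)*(2*η*((L/10)*(intervalMax ℓ 1 u / rT))) :=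
          mul_le_mul_of_nonneg_right hnT (by positivity)
        have h2 : (T:ℝ)*(2*η*((L/10)*(intervalMax ℓ 1 u / rT)))
            = (η*L*(intervalMax ℓ 1 u)*rT)/5 := by
          rw [← hrT2]
          field_simp
          ring
        have h3 : (η*L*(intervalMax ℓ 1 u)*rT)/5 ≤ 10*η*(d:ℝ)*rT*(intervalMax ℓ 1 u) := by
          have key : 0 ≤ η*rT*(intervalMax ℓ 1 u)*(10*(d:ℝ) - L/5) :=
            mul_nonneg (mul_nonneg (mul_nonneg (le_of_lt hη0) (le_of_lt hrT0))
              (le_of_lt hlbu_pos)) (by linarith only [hLd, hd0])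
          nlinarith only [key]
        linarith only [h1, h2, h3]
      have hA7 : (((u - t0 : ℕ) : ℝ) + 1)*(2*η*L + η^2*(m*L^2))
          ≤ η*ρ*((u - t0 : ℕ) : ℝ)*B2 := by
        have b1 : 2*L + η*(m*L^2) ≤ 3*L := by
          have : η*(m*L^2) = η*m*L^2 := by ring
          linarith only [hηmL1, this]
        have b3 : (((u - t0 : ℕ) : ℝ) + 1)*(2*L + η*(m*L^2))
            ≤ (2*((u - t0 : ℕ) : ℝ))*(3*L) :=
          mul_le_mul (by linarith only [hn1]) b1 (by positivity) (by linarith only [hn1])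
        have b4 : (2*((u - t0 : ℕ) : ℝ))*(3*L) ≤ ((u - t0 : ℕ) : ℝ)*(ρ*B2) := by
          have key : 0 ≤ ((u - t0 : ℕ) : ℝ)*(ρ*B2 - 6*L) :=
            mul_nonneg (by linarith only [hn1]) (by linarith only [hρB2, hL0])
          nlinarith only [key]
        have b5 : (((u - t0 : ℕ) : ℝ) + 1)*(2*η*L + η^2*(m*L^2))
            = η*((((u - t0 : ℕ) : ℝ) + 1)*(2*L + η*(m*L^2))) := by ring
        rw [b5]
        calc η*((((u - t0 : ℕ) : ℝ) + 1)*(2*L + η*(m*L^2)))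
            ≤ η*((2*((u - t0 : ℕ) : ℝ))*(3*L)) :=
              mul_le_mul_of_nonneg_left b3 (le_of_lt hη0)
          _ ≤ η*(((u - t0 : ℕ) : ℝ)*(ρ*B2)) :=
              mul_le_mul_of_nonneg_left b4 (le_of_lt hη0)
          _ = η*ρ*((u - t0 : ℕ) : ℝ)*B2 := by ring
      have hA4 : ((u - t0 : ℕ) : ℝ)*(B2/2) ≤ ∑ τ ∈ Finset.Icc t0 u, l1 (lam τ) := by
        have h1 : ∑ _τ ∈ Finset.Icc (t0+1) u, (B2/2)
            ≤ ∑ τ ∈ Finset.Icc (t0+1) u, l1 (lam τ) := by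
          apply Finset.sum_le_sum
          intro τ hτ
          obtain ⟨ha, hb⟩ := Finset.mem_Icc.mp hτ
          exact le_trans (le_of_lt (habove τ (by omega) hb)) (hWl1 τ)
        have h2 : ∑ _τ ∈ Finset.Icc (t0+1) u, (B2/2 : ℝ) = ((u - t0 : ℕ) : ℝ) * (B2/2) := by
          rw [Finset.sum_const, Nat.card_Icc]
          have h' : u+1-(t0+1) = u - t0 := by omega
          rw [h', nsmul_eq_mul]
        have h3 : ∑ τ ∈ Finset.Icc (t0+1) u, l1 (lam τ)
            ≤ ∑ τ ∈ Finset.Icc t0 u, l1 (lam τ) :=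
          Finset.sum_le_sum_of_subset_of_nonneg
            (Finset.Icc_subset_Icc (by omega) (le_refl u))
            (fun τ _ _ => l1_nonneg' _)
        linarith only [h1, h2, h3]
      have hA4' : 2*η*ρ*(((u - t0 : ℕ) : ℝ)*(B2/2)) ≤ 2*η*ρ*(∑ τ ∈ Finset.Icc t0 u, l1 (lam τ)) :=
        mul_le_mul_of_nonneg_left hA4 (by positivity)
      have hVfin : V (u+1) ≤ B2^2 := by
        nlinarith only [hclaimu, hVt0, hA3, hE1, hE1B, hA6, hA7, hA4', sq_nonneg B2]
      calc W (u+1) = Real.sqrt (V (u+1)) := by rw [hW_def]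
        _ ≤ Real.sqrt (B2^2) := Real.sqrt_le_sqrt hVfin
        _ = B2 := Real.sqrt_sq (le_of_lt hB2pos)
  -- conclusion
  intro t ht
  obtain ⟨ht1, htT1⟩ := Finset.mem_Icc.mp ht
  calc l1 (lam t) ≤ rm * W t := hl1W t
    _ ≤ rm * B2 := mul_le_mul_of_nonneg_left (main t ht1 htT1) (le_of_lt hrm0)
    _ = 20 * m * L ^ 2 / ρ ^ 2 := hrmB2
end

section
/- Fix d, m, T ∈ ℕ, reals η > 0 and E ≥ 0. For t ∈ {1,…,T} let G_t ∈ ℝ^{d×m} have all entries in [−1,1], let q̂_t, q_t ∈ ℝ^d with Σ_{t=1}^T ‖q_t − q̂_t‖₁ ≤ E, let λ_1 = 0 ∈ ℝ^m, and suppose λ_{t+1,i} = max{ λ_{t,i} + η·(G_tᵀq̂_t)_i, 0 } for every t ∈ {1,…,T} and every i. Then max_{i ∈ {1,…,m}} Σ_{t=1}^T (G_tᵀ q_t)_i ≤ ‖λ_{T+1}‖₁/η + E. -/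
open Finset Matrix

lemma telesc (f : ℕ → ℝ) (T : ℕ) :
    ∑ t ∈ Finset.Icc 1 T, (f (t + 1) - f t) = f (T + 1) - f 1 := by
  induction T with
  | zero => simp
  | succ n ih =>
    rw [Finset.sum_Icc_succ_top (by omega : 1 ≤ n + 1), ih]
    ring

/-- Cumulative constraint violation bound from the unclipped dual update: for every
constraint `i`, `Σ_t (G_tᵀ q_t)_i ≤ ‖λ_{T+1}‖₁/η + E`. -/
theorem stmt9 {d m : ℕ} (T : ℕ) (η E : ℝ) (hη : 0 < η) (hE : 0 ≤ E)
    (G : ℕ → Matrix (Fin d) (Fin m) ℝ)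
    (hG : ∀ t ∈ Finset.Icc 1 T, ∀ j i, |G t j i| ≤ 1)
    (qtrue qh : ℕ → Fin d → ℝ)
    (hdiff : ∑ t ∈ Finset.Icc 1 T, l1 (fun j => qtrue t j - qh t j) ≤ E)
    (lam : ℕ → Fin m → ℝ)
    (hlam1 : ∀ i, lam 1 i = 0)
    (hupd : ∀ t ∈ Finset.Icc 1 T, ∀ i,
      lam (t + 1) i = max (lam t i + η * ((G t)ᵀ *ᵥ qh t) i) 0) :
    ∀ i, ∑ t ∈ Finset.Icc 1 T, ((G t)ᵀ *ᵥ qtrue t) i ≤ l1 (lam (T + 1)) / η + E := by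
  intro i
  -- telescoping
  have htel : ∑ t ∈ Finset.Icc 1 T, (lam (t+1) i - lam t i) = lam (T+1) i - lam 1 i := by
    exact telesc (fun t => lam t i) T
  have hsum1 : η * ∑ t ∈ Finset.Icc 1 T, ((G t)ᵀ *ᵥ qh t) i ≤ lam (T+1) i := by
    rw [Finset.mul_sum]
    calc ∑ t ∈ Finset.Icc 1 T, η * ((G t)ᵀ *ᵥ qh t) i
        ≤ ∑ t ∈ Finset.Icc 1 T, (lam (t+1) i - lam t i) := by
          apply Finset.sum_le_sum
          intro t ht
          have h2 : lam t i + η * ((G t)ᵀ *ᵥ qh t) i ≤ lam (t+1) i := by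
            rw [hupd t ht i]; exact le_max_left _ _
          linarith
      _ = lam (T+1) i - lam 1 i := htel
      _ = lam (T+1) i := by rw [hlam1]; ring
  have hl1 : lam (T+1) i ≤ l1 (lam (T+1)) := by
    refine le_trans (le_abs_self _) ?_
    simp only [l1]
    exact Finset.single_le_sum (f := fun j => |lam (T+1) j|) (fun j _ => abs_nonneg _) (Finset.mem_univ i)
  have hhat : ∑ t ∈ Finset.Icc 1 T, ((G t)ᵀ *ᵥ qh t) i ≤ l1 (lam (T+1)) / η := by
    rw [le_div_iff₀ hη, mul_comm]
    exact le_trans hsum1 hl1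
  have hdt : ∀ t ∈ Finset.Icc 1 T,
      ((G t)ᵀ *ᵥ qtrue t) i - ((G t)ᵀ *ᵥ qh t) i ≤ l1 (fun j => qtrue t j - qh t j) := by
    intro t ht
    simp only [Matrix.mulVec, dotProduct, Matrix.transpose_apply, l1]
    rw [← Finset.sum_sub_distrib]
    apply Finset.sum_le_sum
    intro j _
    have : G t j i * qtrue t j - G t j i * qh t j = G t j i * (qtrue t j - qh t j) := by ring
    rw [this]
    calc G t j i * (qtrue t j - qh t j) ≤ |G t j i * (qtrue t j - qh t j)| := le_abs_self _
      _ = |G t j i| * |qtrue t j - qh t j| := abs_mul _ _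
      _ ≤ 1 * |qtrue t j - qh t j| := by
          apply mul_le_mul_of_nonneg_right (hG t ht j i) (abs_nonneg _)
      _ = |qtrue t j - qh t j| := one_mul _
  have hsplit : ∑ t ∈ Finset.Icc 1 T, ((G t)ᵀ *ᵥ qtrue t) i
      ≤ (∑ t ∈ Finset.Icc 1 T, ((G t)ᵀ *ᵥ qh t) i) + E := by
    have := Finset.sum_le_sum hdt
    rw [Finset.sum_sub_distrib] at this
    linarith
  linarith
end

section
/- Fix d, m, T ∈ ℕ and reals Λ ≥ 0, E ≥ 0. For t ∈ {1,…,T} let r_t ∈ [0,1]^d, let G_t ∈ ℝ^{d×m} have all entries in [−1,1], let λ_t ∈ ℝ^m with λ_t ≥ 0 componentwise and ‖λ_t‖₁ ≤ Λ, and let q_t, q̂_t ∈ ℝ^d with Σ_{t=1}^T ‖q_t − q̂_t‖₁ ≤ E. Let q̃ ∈ ℝ^d satisfy (G_tᵀq̃)_i ≤ 0 for all t and i. Define ℓ_t := G_t λ_t − r_t, R^P := Σ_{t=1}^T ℓ_tᵀ(q_t − q̃), and R^D := −Σ_{t=1}^T λ_tᵀ G_tᵀ q̂_t. Then Σ_{t=1}^T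 r_tᵀ q_t ≥ Σ_{t=1}^T r_tᵀ q̃ − Λ·E − R^D − R^P. -/
open Finset Matrix

/-- Deterministic reward lower bound for the adversarial-constraint analysis of PDGD-OPS. -/
theorem stmt11 {d m : ℕ} (T : ℕ) (Λ E : ℝ) (hΛ : 0 ≤ Λ) (hE : 0 ≤ E)
    (r : ℕ → Fin d → ℝ) (hr : ∀ t ∈ Finset.Icc 1 T, ∀ j, r t j ∈ Set.Icc (0 : ℝ) 1)
    (G : ℕ → Matrix (Fin d) (Fin m) ℝ)
    (hG : ∀ t ∈ Finset.Icc 1 T, ∀ j i, |G t j i| ≤ 1)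
    (lam : ℕ → Fin m → ℝ)
    (hlnn : ∀ t ∈ Finset.Icc 1 T, ∀ i, 0 ≤ lam t i)
    (hl1 : ∀ t ∈ Finset.Icc 1 T, l1 (lam t) ≤ Λ)
    (qtrue qh : ℕ → Fin d → ℝ)
    (hdiff : ∑ t ∈ Finset.Icc 1 T, l1 (fun j => qtrue t j - qh t j) ≤ E)
    (qmix : Fin d → ℝ)
    (hqmix : ∀ t ∈ Finset.Icc 1 T, ∀ i, ((G t)ᵀ *ᵥ qmix) i ≤ 0)
    (RP RD : ℝ)
    (hRP : RP = ∑ t ∈ Finset.Icc 1 T,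
      dotp (fun j => (G t *ᵥ lam t) j - r t j) (fun j => qtrue t j - qmix j))
    (hRD : RD = -∑ t ∈ Finset.Icc 1 T, dotp (lam t) ((G t)ᵀ *ᵥ qh t)) :
    ∑ t ∈ Finset.Icc 1 T, dotp (r t) qmix - Λ * E - RD - RP ≤
      ∑ t ∈ Finset.Icc 1 T, dotp (r t) (qtrue t) := by
  subst hRP hRD
  have key : ∀ t ∈ Finset.Icc 1 T,
      dotp (r t) qmix - dotp (r t) (qtrue t) ≤
        dotp (fun j => (G t *ᵥ lam t) j - r t j) (fun j => qtrue t j - qmix j)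
        + (- dotp (lam t) ((G t)ᵀ *ᵥ qh t))
        + Λ * l1 (fun j => qtrue t j - qh t j) := by
    intro t ht
    have hlΛ : l1 (lam t) ≤ Λ := hl1 t ht
    have hGl : ∀ j, |(G t *ᵥ lam t) j| ≤ Λ := by
      intro j
      calc |(G t *ᵥ lam t) j| = |∑ i, G t j i * lam t i| := by
            simp [Matrix.mulVec, dotProduct]
        _ ≤ ∑ i, |G t j i * lam t i| := Finset.abs_sum_le_sum_abs _ _
        _ ≤ ∑ i, lam t i := by
            refine Finset.sum_le_sum fun i _ => ?_
            rw [abs_mul]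
            calc |G t j i| * |lam t i| ≤ 1 * |lam t i| :=
                  mul_le_mul_of_nonneg_right (hG t ht j i) (abs_nonneg _)
              _ = lam t i := by rw [one_mul, abs_of_nonneg (hlnn t ht i)]
        _ ≤ Λ := by
            refine le_trans (le_of_eq ?_) hlΛ
            simp only [l1]
            exact (Finset.sum_congr rfl fun i _ => (abs_of_nonneg (hlnn t ht i)).symm)
    -- swap identities
    have hswap : dotp (lam t) ((G t)ᵀ *ᵥ qh t) = dotp (G t *ᵥ lam t) (qh t) := by
      simp only [dotp, Matrix.mulVec, dotProduct, Matrix.transpose_apply,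
        Finset.sum_mul, Finset.mul_sum]
      rw [Finset.sum_comm]
      exact Finset.sum_congr rfl fun j _ => Finset.sum_congr rfl fun i _ => by ring
    have hswap2 : dotp (lam t) ((G t)ᵀ *ᵥ qmix) = dotp (G t *ᵥ lam t) qmix := by
      simp only [dotp, Matrix.mulVec, dotProduct, Matrix.transpose_apply,
        Finset.sum_mul, Finset.mul_sum]
      rw [Finset.sum_comm]
      exact Finset.sum_congr rfl fun j _ => Finset.sum_congr rfl fun i _ => by ring
    have hneg : dotp (G t *ᵥ lam t) qmix ≤ 0 := by
      rw [← hswap2]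
      exact Finset.sum_nonpos fun i _ =>
        mul_nonpos_of_nonneg_of_nonpos (hlnn t ht i) (hqmix t ht i)
    have hexp : dotp (fun j => (G t *ᵥ lam t) j - r t j) (fun j => qtrue t j - qmix j)
        = dotp (G t *ᵥ lam t) (qtrue t) - dotp (G t *ᵥ lam t) qmix
          - dotp (r t) (qtrue t) + dotp (r t) qmix := by
      simp only [dotp, ← Finset.sum_sub_distrib, ← Finset.sum_add_distrib]
      exact Finset.sum_congr rfl fun j _ => by ring
    have hbound : dotp (G t *ᵥ lam t) (qh t) - dotp (G t *ᵥ lam t) (qtrue t)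
        ≤ Λ * l1 (fun j => qtrue t j - qh t j) := by
      simp only [dotp, l1, ← Finset.sum_sub_distrib, Finset.mul_sum]
      refine Finset.sum_le_sum fun j _ => ?_
      have h1 : (G t *ᵥ lam t) j * qh t j - (G t *ᵥ lam t) j * qtrue t j
          = (G t *ᵥ lam t) j * (qh t j - qtrue t j) := by ring
      rw [h1]
      calc (G t *ᵥ lam t) j * (qh t j - qtrue t j)
          ≤ |(G t *ᵥ lam t) j * (qh t j - qtrue t j)| := le_abs_self _
        _ = |(G t *ᵥ lam t) j| * |qh t j - qtrue t j| := abs_mul _ _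
        _ ≤ Λ * |qtrue t j - qh t j| := by
            rw [abs_sub_comm]
            exact mul_le_mul_of_nonneg_right (hGl j) (abs_nonneg _)
    rw [hswap]
    linarith [hexp, hbound, hneg]
  have hsum := Finset.sum_le_sum key
  have hL : Λ * (∑ t ∈ Finset.Icc 1 T, l1 (fun j => qtrue t j - qh t j)) ≤ Λ * E :=
    mul_le_mul_of_nonneg_left hdiff hΛ
  simp only [Finset.sum_sub_distrib, Finset.sum_add_distrib, Finset.sum_neg_distrib,
    ← Finset.mul_sum] at hsum
  linarith
end

section
/- Let X be a finite state space partitioned into layers X₀,…,X_L with X₀ = {x₀}, let A be a finite action set, let P and P' be two transition functions on this layered structure, and let π be a policy. Then for every k ∈ {1,…,L−1}: Σ_{x∈X_k} Σ_{a∈A} | q^{P',π}(x,a) − q^{P,π}(x,a) | ≤ Σ_{s=0}^{k−1} Σ_{x_s∈X_s} Σ_{a_s∈A} q^{P,π}(x_s,a_s) · ‖P'(·|x_s,a_s) − P(·|x_s,a_s)‖₁, where ‖P'(·|x,a) − P(·|x,a)‖₁ := Σ_{x'∈X} |P'(x'|x,a) − P(x'|x,a)|. -/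
open Finset

/-- Layer-wise comparison of occupancy measures induced by two transition functions `P`, `P'`
and the same policy `π` in an episodic loop-free MDP. Here `reachP` and `reachP'` are the
reach probabilities of `(P,π)` and `(P',π)`, characterized by their recursions, and
`q^{P,π}(x,a) = reachP(x)·π(a|x)·Σ_{x'} P(x'|x,a)`. -/
theorem stmt13 {X A : Type*} [Fintype X] [Fintype A]
    (L : ℕ) (hL : 1 ≤ L)
    (layer : X → ℕ) (hlayer : ∀ x, layer x ≤ L)
    (x0 : X) (h0 : ∀ x, layer x = 0 ↔ x = x0)
    (P P' : X → A → X → ℝ)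
    (hPnn : ∀ x a x', 0 ≤ P x a x')
    (hPsum : ∀ x a, layer x < L → ∑ x', P x a x' = 1)
    (hPsupp : ∀ x a x', layer x < L → P x a x' ≠ 0 → layer x' = layer x + 1)
    (hP'nn : ∀ x a x', 0 ≤ P' x a x')
    (hP'sum : ∀ x a, layer x < L → ∑ x', P' x a x' = 1)
    (hP'supp : ∀ x a x', layer x < L → P' x a x' ≠ 0 → layer x' = layer x + 1)
    (π : X → A → ℝ) (hπnn : ∀ x a, 0 ≤ π x a) (hπsum : ∀ x, ∑ a, π x a = 1)
    (reachP reachP' : X → ℝ)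
    (hreachP0 : reachP x0 = 1)
    (hreachP : ∀ x' : X, 1 ≤ layer x' →
      reachP x' = ∑ x ∈ Finset.univ.filter (fun x => layer x + 1 = layer x'),
        ∑ a, reachP x * π x a * P x a x')
    (hreachP'0 : reachP' x0 = 1)
    (hreachP' : ∀ x' : X, 1 ≤ layer x' →
      reachP' x' = ∑ x ∈ Finset.univ.filter (fun x => layer x + 1 = layer x'),
        ∑ a, reachP' x * π x a * P' x a x') :
    ∀ k : ℕ, 1 ≤ k → k < L →
      ∑ x ∈ Finset.univ.filter (fun x => layer x = k), ∑ a,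
          |reachP' x * π x a * (∑ x', P' x a x') - reachP x * π x a * (∑ x', P x a x')| ≤
        ∑ s ∈ Finset.range k, ∑ x ∈ Finset.univ.filter (fun x => layer x = s), ∑ a,
          (reachP x * π x a * (∑ x', P x a x')) * (∑ x', |P' x a x' - P x a x'|) := by
  intro k hk1 hkL
  -- reach probabilities are nonnegative
  have hreachnn : ∀ n, ∀ x : X, layer x = n → 0 ≤ reachP x := by
    intro n
    induction n with
    | zero =>
      intro x hx
      rw [(h0 x).mp hx, hreachP0]; norm_num
    | succ n ih =>
      intro x hx
      rw [hreachP x (by omega)]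
      refine Finset.sum_nonneg fun y hy => Finset.sum_nonneg fun a _ => ?_
      simp only [Finset.mem_filter] at hy
      have hyl : layer y = n := by omega
      exact mul_nonneg (mul_nonneg (ih y hyl) (hπnn y a)) (hPnn y a x)
  set Δ : X → ℝ := fun x => reachP' x - reachP x with hΔ
  set D : ℕ → ℝ := fun m => ∑ x ∈ Finset.univ.filter (fun x => layer x = m), |Δ x| with hD
  set E : ℕ → ℝ := fun s => ∑ x ∈ Finset.univ.filter (fun x => layer x = s),
      ∑ a, reachP x * π x a * (∑ x', |P' x a x' - P x a x'|) with hE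
  -- key recursive step
  have hstep : ∀ m, m < L → D (m + 1) ≤ D m + E m := by
    intro m hm
    have h1 : D (m + 1) ≤ ∑ x' ∈ Finset.univ.filter (fun x => layer x = m + 1),
        ∑ x ∈ Finset.univ.filter (fun x => layer x = m), ∑ a,
          (|Δ x| * π x a * P' x a x' + reachP x * π x a * |P' x a x' - P x a x'|) := by
      refine Finset.sum_le_sum fun x' hx' => ?_
      simp only [Finset.mem_filter] at hx'
      have hx'1 : layer x' = m + 1 := hx'.2
      have hfilter : Finset.univ.filter (fun x : X => layer x + 1 = layer x') =
          Finset.univ.filter (fun x : X => layer x = m) := by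
        apply Finset.filter_congr
        intro x _
        rw [hx'1]
        constructor <;> intro h <;> omega
      have hΔx' : Δ x' = ∑ x ∈ Finset.univ.filter (fun x : X => layer x = m), ∑ a,
          (Δ x * π x a * P' x a x' + reachP x * π x a * (P' x a x' - P x a x')) := by
        show reachP' x' - reachP x' = _
        rw [hreachP' x' (by omega), hreachP x' (by omega), hfilter,
          ← Finset.sum_sub_distrib]
        refine Finset.sum_congr rfl fun x _ => ?_
        rw [← Finset.sum_sub_distrib]
        refine Finset.sum_congr rfl fun a _ => ?_
        show reachP' x * π x a * P' x a x' - reachP x * π x a * P x a x' = _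
        ring
      rw [hΔx']
      refine (Finset.abs_sum_le_sum_abs _ _).trans (Finset.sum_le_sum fun x hx => ?_)
      refine (Finset.abs_sum_le_sum_abs _ _).trans (Finset.sum_le_sum fun a _ => ?_)
      simp only [Finset.mem_filter] at hx
      refine (abs_add_le _ _).trans (le_of_eq ?_)
      rw [abs_mul, abs_mul, abs_mul, abs_mul, abs_of_nonneg (hπnn x a),
        abs_of_nonneg (hP'nn x a x'), abs_of_nonneg (hreachnn _ x rfl)]
    refine h1.trans ?_
    rw [Finset.sum_comm]
    have h2 : ∀ x ∈ Finset.univ.filter (fun x : X => layer x = m),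
        (∑ x' ∈ Finset.univ.filter (fun x : X => layer x = m + 1), ∑ a,
          (|Δ x| * π x a * P' x a x' + reachP x * π x a * |P' x a x' - P x a x'|))
        ≤ |Δ x| + ∑ a, reachP x * π x a * (∑ x', |P' x a x' - P x a x'|) := by
      intro x hx
      simp only [Finset.mem_filter] at hx
      rw [Finset.sum_comm]
      have := Finset.sum_le_sum (s := (Finset.univ : Finset A))
        (f := fun a => ∑ x' ∈ Finset.univ.filter (fun x : X => layer x = m + 1),
          (|Δ x| * π x a * P' x a x' + reachP x * π x a * |P' x a x' - P x a x'|))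
        (g := fun a => |Δ x| * π x a + reachP x * π x a * (∑ x', |P' x a x' - P x a x'|))
        ?_
      · refine this.trans (le_of_eq ?_)
        rw [Finset.sum_add_distrib, ← Finset.mul_sum, hπsum, mul_one]
      · intro a _
        rw [Finset.sum_add_distrib, ← Finset.mul_sum, ← Finset.mul_sum]
        have hb1 : ∑ x' ∈ Finset.univ.filter (fun x : X => layer x = m + 1),
            P' x a x' ≤ 1 := by
          rw [← hP'sum x a (by omega)]
          exact Finset.sum_le_sum_of_subset_of_nonneg (Finset.subset_univ _)
            (fun y _ _ => hP'nn x a y)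
        have hb2 : ∑ x' ∈ Finset.univ.filter (fun x : X => layer x = m + 1),
            |P' x a x' - P x a x'| ≤ ∑ x', |P' x a x' - P x a x'| :=
          Finset.sum_le_sum_of_subset_of_nonneg (Finset.subset_univ _)
            (fun y _ _ => abs_nonneg _)
        have hnn1 : 0 ≤ |Δ x| * π x a := mul_nonneg (abs_nonneg _) (hπnn x a)
        have hnn2 : 0 ≤ reachP x * π x a :=
          mul_nonneg (hreachnn _ x rfl) (hπnn x a)
        have := add_le_add (mul_le_of_le_one_right hnn1 hb1)
          (mul_le_mul_of_nonneg_left hb2 hnn2)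
        convert this using 2 <;> ring
    refine (Finset.sum_le_sum h2).trans (le_of_eq ?_)
    rw [Finset.sum_add_distrib]
  -- induction
  have hind : ∀ m, m ≤ L → D m ≤ ∑ s ∈ Finset.range m, E s := by
    intro m
    induction m with
    | zero =>
      intro _
      have hfilt : Finset.univ.filter (fun x : X => layer x = 0) = {x0} := by
        ext x; simp [h0 x]
      simp only [hD, hfilt, Finset.sum_singleton, Finset.range_zero, Finset.sum_empty]
      simp [hΔ, hreachP0, hreachP'0]
    | succ m ih =>
      intro hmL
      have h := hstep m (by omega)
      rw [Finset.sum_range_succ]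
      exact h.trans (add_le_add_left (ih (by omega)) _)
  -- rewrite LHS and RHS
  have hLHS : ∑ x ∈ Finset.univ.filter (fun x => layer x = k), ∑ a,
      |reachP' x * π x a * (∑ x', P' x a x') - reachP x * π x a * (∑ x', P x a x')| = D k := by
    refine Finset.sum_congr rfl fun x hx => ?_
    simp only [Finset.mem_filter] at hx
    have hlt : layer x < L := by omega
    rw [show (∑ a, |reachP' x * π x a * (∑ x', P' x a x') -
        reachP x * π x a * (∑ x', P x a x')|) = ∑ a, π x a * |Δ x| from ?_]
    · rw [← Finset.sum_mul, hπsum, one_mul]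
    · refine Finset.sum_congr rfl fun a _ => ?_
      rw [hP'sum x a hlt, hPsum x a hlt, mul_one, mul_one]
      rw [show reachP' x * π x a - reachP x * π x a = π x a * Δ x by simp [hΔ]; ring,
        abs_mul, abs_of_nonneg (hπnn x a)]
  have hRHS : ∑ s ∈ Finset.range k, ∑ x ∈ Finset.univ.filter (fun x => layer x = s), ∑ a,
      (reachP x * π x a * (∑ x', P x a x')) * (∑ x', |P' x a x' - P x a x'|)
      = ∑ s ∈ Finset.range k, E s := by
    refine Finset.sum_congr rfl fun s hs => Finset.sum_congr rfl fun x hx =>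
      Finset.sum_congr rfl fun a _ => ?_
    simp only [Finset.mem_range] at hs
    simp only [Finset.mem_filter] at hx
    rw [hPsum x a (by omega), mul_one]
  rw [hLHS, hRHS]
  exact hind k (by omega)
end

section
/- Fix d, m, T ∈ ℕ and reals Λ ≥ 0, E_q ≥ 0, E_G ≥ 0. For t ∈ {1,…,T} let r_t ∈ [0,1]^d, let G_t ∈ ℝ^{d×m} have all entries in [−1,1], let λ_t ∈ ℝ^m with λ_t ≥ 0 componentwise and ‖λ_t‖₁ ≤ Λ, and let q_t, q̂_t ∈ ℝ^d with Σ_{t=1}^T ‖q_t − q̂_t‖₁ ≤ E_q. Let Ḡ ∈ ℝ^{d×m} and q* ∈ ℝ^d satisfy (Ḡᵀq*)_i ≤ 0 for all i, and suppose | Σ_{t=1}^T λ_tᵀ (G_t − Ḡ)ᵀ q* | ≤ Λ·E_G. Define ℓ_t := G_t λ_t − r_t, R^P := Σ_{t=1}^T ℓ_tᵀ(q_t − q*), and R^D := −Σ_{t=1}^T λ_tᵀ G_tᵀ q̂_t. Then Σ_{t=1}^T r_tᵀ q_t ≥ Σ_{t=1}^T r_tᵀ q* − Λ·E_G − Λ·E_q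 − R^D − R^P. -/
open Finset Matrix

lemma dotp_swap {d m : ℕ} (M : Matrix (Fin d) (Fin m) ℝ) (lam : Fin m → ℝ) (v : Fin d → ℝ) :
    dotp lam (Mᵀ *ᵥ v) = dotp (M *ᵥ lam) v := by
  simp only [dotp, mulVec, dotProduct, Matrix.transpose_apply, Finset.mul_sum, Finset.sum_mul]
  rw [Finset.sum_comm]
  exact Finset.sum_congr rfl fun j _ => Finset.sum_congr rfl fun i _ => by ring

lemma dotp_sub_right {d : ℕ} (x u v : Fin d → ℝ) :
    dotp x (fun i => u i - v i) = dotp x u - dotp x v := by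
  simp [dotp, mul_sub, Finset.sum_sub_distrib]

lemma dotp_sub_right' {d : ℕ} (x u v : Fin d → ℝ) :
    dotp x (u - v) = dotp x u - dotp x v := by
  simp [dotp, mul_sub, Finset.sum_sub_distrib]

lemma dotp_sub_left {d : ℕ} (x y u : Fin d → ℝ) :
    dotp (fun i => x i - y i) u = dotp x u - dotp y u := by
  simp [dotp, sub_mul, Finset.sum_sub_distrib]

lemma key_bound {d m : ℕ} (Λ : ℝ) (M : Matrix (Fin d) (Fin m) ℝ) (lam : Fin m → ℝ)
    (v : Fin d → ℝ) (hln : ∀ i, 0 ≤ lam i) (hl : l1 lam ≤ Λ) (hM : ∀ j i, |M j i| ≤ 1) :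
    |dotp lam (Mᵀ *ᵥ v)| ≤ Λ * l1 v := by
  have hv : 0 ≤ l1 v := Finset.sum_nonneg fun i _ => abs_nonneg _
  have inner : ∀ i, |(Mᵀ *ᵥ v) i| ≤ l1 v := by
    intro i
    have h1 : (Mᵀ *ᵥ v) i = ∑ j, M j i * v j := by
      simp [mulVec, dotProduct, Matrix.transpose_apply]
    rw [h1]
    calc |∑ j, M j i * v j| ≤ ∑ j, |M j i * v j| := Finset.abs_sum_le_sum_abs _ _
      _ ≤ ∑ j, |v j| := by
          refine Finset.sum_le_sum fun j _ => ?_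
          rw [abs_mul]
          calc |M j i| * |v j| ≤ 1 * |v j| :=
                mul_le_mul_of_nonneg_right (hM j i) (abs_nonneg _)
            _ = |v j| := one_mul _
  calc |dotp lam (Mᵀ *ᵥ v)| ≤ ∑ i, |lam i * (Mᵀ *ᵥ v) i| := Finset.abs_sum_le_sum_abs _ _
    _ ≤ ∑ i : Fin m, lam i * l1 v := by
        refine Finset.sum_le_sum fun i _ => ?_
        rw [abs_mul, abs_of_nonneg (hln i)]
        exact mul_le_mul_of_nonneg_left (inner i) (hln i)
    _ = l1 lam * l1 v := by
        have : l1 lam = ∑ i, lam i := by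
          unfold l1; exact Finset.sum_congr rfl fun i _ => abs_of_nonneg (hln i)
        rw [this, ← Finset.sum_mul]
    _ ≤ Λ * l1 v := mul_le_mul_of_nonneg_right hl hv

/-- Deterministic reward lower bound for the stochastic-constraint analysis of PDGD-OPS. -/
theorem stmt15 {d m : ℕ} (T : ℕ) (Λ Eq EG : ℝ) (hΛ : 0 ≤ Λ) (hEq : 0 ≤ Eq) (hEG : 0 ≤ EG)
    (r : ℕ → Fin d → ℝ) (hr : ∀ t ∈ Finset.Icc 1 T, ∀ j, r t j ∈ Set.Icc (0 : ℝ) 1)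
    (G : ℕ → Matrix (Fin d) (Fin m) ℝ)
    (hG : ∀ t ∈ Finset.Icc 1 T, ∀ j i, |G t j i| ≤ 1)
    (lam : ℕ → Fin m → ℝ)
    (hlnn : ∀ t ∈ Finset.Icc 1 T, ∀ i, 0 ≤ lam t i)
    (hl1 : ∀ t ∈ Finset.Icc 1 T, l1 (lam t) ≤ Λ)
    (qtrue qh : ℕ → Fin d → ℝ)
    (hdiff : ∑ t ∈ Finset.Icc 1 T, l1 (fun j => qtrue t j - qh t j) ≤ Eq)
    (Gbar : Matrix (Fin d) (Fin m) ℝ) (qstar : Fin d → ℝ)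
    (hfeas : ∀ i, (Gbarᵀ *ᵥ qstar) i ≤ 0)
    (hAz : |∑ t ∈ Finset.Icc 1 T, dotp (lam t) ((G t - Gbar)ᵀ *ᵥ qstar)| ≤ Λ * EG)
    (RP RD : ℝ)
    (hRP : RP = ∑ t ∈ Finset.Icc 1 T,
      dotp (fun j => (G t *ᵥ lam t) j - r t j) (fun j => qtrue t j - qstar j))
    (hRD : RD = -∑ t ∈ Finset.Icc 1 T, dotp (lam t) ((G t)ᵀ *ᵥ qh t)) :
    ∑ t ∈ Finset.Icc 1 T, dotp (r t) qstar - Λ * EG - Λ * Eq - RD - RP ≤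
      ∑ t ∈ Finset.Icc 1 T, dotp (r t) (qtrue t) := by
  subst hRP hRD
  set S := Finset.Icc 1 T with hS
  -- expand the primal regret
  have hexp : ∑ t ∈ S, dotp (fun j => (G t *ᵥ lam t) j - r t j) (fun j => qtrue t j - qstar j)
      = (∑ t ∈ S, dotp (lam t) ((G t)ᵀ *ᵥ qtrue t) - ∑ t ∈ S, dotp (lam t) ((G t)ᵀ *ᵥ qstar))
        - ∑ t ∈ S, dotp (r t) (qtrue t) + ∑ t ∈ S, dotp (r t) qstar := by
    rw [← Finset.sum_sub_distrib, ← Finset.sum_sub_distrib, ← Finset.sum_add_distrib]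
    refine Finset.sum_congr rfl fun t ht => ?_
    rw [dotp_sub_left, dotp_sub_right, dotp_sub_right, dotp_swap, dotp_swap]
    ring
  -- bound on ∑ λᵀ Gᵀ q*
  have h1 : ∑ t ∈ S, dotp (lam t) ((G t)ᵀ *ᵥ qstar) ≤ Λ * EG := by
    have hsplit : ∀ t ∈ S, dotp (lam t) ((G t - Gbar)ᵀ *ᵥ qstar)
        = dotp (lam t) ((G t)ᵀ *ᵥ qstar) - dotp (lam t) (Gbarᵀ *ᵥ qstar) := by
      intro t ht
      rw [Matrix.transpose_sub, Matrix.sub_mulVec, dotp_sub_right']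
    have hAz' : ∑ t ∈ S, dotp (lam t) ((G t - Gbar)ᵀ *ᵥ qstar) ≥ -(Λ * EG) ∧
        ∑ t ∈ S, dotp (lam t) ((G t - Gbar)ᵀ *ᵥ qstar) ≤ Λ * EG := by
      constructor
      · linarith [(abs_le.mp hAz).1]
      · exact (abs_le.mp hAz).2
    have hbar : ∀ t ∈ S, dotp (lam t) (Gbarᵀ *ᵥ qstar) ≤ 0 := by
      intro t ht
      refine Finset.sum_nonpos fun i _ => mul_nonpos_of_nonneg_of_nonpos (hlnn t ht i) (hfeas i)
    have := Finset.sum_congr rfl hsplit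
    rw [Finset.sum_sub_distrib] at this
    have hbarsum : ∑ t ∈ S, dotp (lam t) (Gbarᵀ *ᵥ qstar) ≤ 0 :=
      Finset.sum_nonpos hbar
    linarith [hAz'.2]
  -- bound on ∑ λᵀ Gᵀ (q - q̂)
  have h2 : -(Λ * Eq) ≤ ∑ t ∈ S, dotp (lam t) ((G t)ᵀ *ᵥ qtrue t)
      - ∑ t ∈ S, dotp (lam t) ((G t)ᵀ *ᵥ qh t) := by
    rw [← Finset.sum_sub_distrib]
    have hterm : ∀ t ∈ S, -(Λ * l1 (fun j => qtrue t j - qh t j))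
        ≤ dotp (lam t) ((G t)ᵀ *ᵥ qtrue t) - dotp (lam t) ((G t)ᵀ *ᵥ qh t) := by
      intro t ht
      have heq : dotp (lam t) ((G t)ᵀ *ᵥ qtrue t) - dotp (lam t) ((G t)ᵀ *ᵥ qh t)
          = dotp (lam t) ((G t)ᵀ *ᵥ fun j => qtrue t j - qh t j) := by
        rw [show (fun j => qtrue t j - qh t j) = qtrue t - qh t from rfl,
          Matrix.mulVec_sub, dotp_sub_right']
      rw [heq]
      have := key_bound Λ (G t) (lam t) (fun j => qtrue t j - qh t j)
        (hlnn t ht) (hl1 t ht) (hG t ht)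
      linarith [(abs_le.mp this).1]
    calc -(Λ * Eq) ≤ -(Λ * ∑ t ∈ S, l1 (fun j => qtrue t j - qh t j)) := by
          have := mul_le_mul_of_nonneg_left hdiff hΛ
          linarith
      _ = ∑ t ∈ S, -(Λ * l1 (fun j => qtrue t j - qh t j)) := by
          rw [Finset.mul_sum, Finset.sum_neg_distrib]
      _ ≤ _ := Finset.sum_le_sum hterm
  rw [hexp]
  linarith
end
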